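/- arXiv:1609.04960 — 11 statements merged into one kernel-verified Lean document; each statement's English description precedes it below -/
import Mathlib

section
/- Let c ⊆ N and let L_c be a nonempty collection of proper subsets of c each of which is obtained by removing exactly one element from c (i.e., every x ∈ L_c satisfies x ⊂ c and |c \ x| = 1). Let R = ∪_{x ∈ L_c} (c \ x). Then the simple game Γ(N, L_c) is weighted: with quota q = |R|, weights w_i = |R| for i ∉ c, w_i = 1 for i ∈ R, and w_i = 0 for i ∈ c \ R, a coalition S wins in Γ(N, L_c) if and only if Σ_{i ∈ S} w_i ≥ q. -/
open Finset

/-- Winning predicate of the simple game determined by a collection `L` of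
(maximal) losing coalitions: `S` loses iff `S ⊆ y` for some `y ∈ L`. -/
def wins {n : ℕ} (L : Finset (Finset (Fin n))) (S : Finset (Fin n)) : Prop :=
  ∀ y ∈ L, ¬ S ⊆ y

/-- A winning predicate is weighted with quota `q` and nonnegative weights `w`. -/
def IsWeightedRepr {n : ℕ} (win : Finset (Fin n) → Prop) (q : ℝ) (w : Fin n → ℝ) : Prop :=
  0 ≤ q ∧ (∀ i, 0 ≤ w i) ∧ ∀ S : Finset (Fin n), win S ↔ q ≤ ∑ i ∈ S, w i

/-- A winning predicate is weighted. -/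
def IsWeighted {n : ℕ} (win : Finset (Fin n) → Prop) : Prop :=
  ∃ q w, IsWeightedRepr win q w

/-- Hamming distance between coalitions. -/
def hdist {n : ℕ} (x y : Finset (Fin n)) : ℕ := (x \ y).card + (y \ x).card

/-- The dimension of a game given by its winning predicate: the least `d` such that
the game is the intersection of `d` weighted games. -/
noncomputable def gameDim {n : ℕ} (win : Finset (Fin n) → Prop) : ℕ :=
  sInf {d | ∃ W : Fin d → (Finset (Fin n) → Prop),
    (∀ i, IsWeighted (W i)) ∧ ∀ S, win S ↔ ∀ i, W i S}

/-- A simple game on `n` players. -/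
structure SimpleGame (n : ℕ) where
  win : Finset (Fin n) → Prop
  mono : ∀ S T : Finset (Fin n), S ⊆ T → win S → win T
  empty_not_win : ¬ win ∅
  univ_win : win Finset.univ

/-- The maximal losing coalitions of a simple game. -/
def maxLosing {n : ℕ} (G : SimpleGame n) : Set (Finset (Fin n)) :=
  {T | ¬ G.win T ∧ ∀ T' : Finset (Fin n), T ⊂ T' → G.win T'}

/-- `C` is a binary covering code of length `n` with covering radius `1`. -/
def IsCoveringCode {n : ℕ} (C : Finset (Finset (Fin n))) : Prop :=
  ∀ x : Finset (Fin n), ∃ c ∈ C, hdist x c ≤ 1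

/-- `K n`: the minimum size of a binary covering code of length `n`, radius `1`. -/
noncomputable def K (n : ℕ) : ℕ :=
  sInf {k | ∃ C : Finset (Finset (Fin n)), IsCoveringCode C ∧ C.card = k}

theorem stmt1 {n : ℕ} (c : Finset (Fin n)) (Lc : Finset (Finset (Fin n)))
    (hne : Lc.Nonempty) (hLc : ∀ x ∈ Lc, x ⊂ c ∧ (c \ x).card = 1)
    (R : Finset (Fin n)) (hR : ∀ i, i ∈ R ↔ ∃ x ∈ Lc, i ∈ c \ x)
    (w : Fin n → ℝ)
    (hw : ∀ i, w i = if i ∉ c then (R.card : ℝ) else if i ∈ R then 1 else 0) :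
    ∀ S : Finset (Fin n), wins Lc S ↔ (R.card : ℝ) ≤ ∑ i ∈ S, w i := by
  have hwnonneg : ∀ i, 0 ≤ w i := by
    intro i
    rw [hw i]
    split_ifs <;> positivity
  intro S
  by_cases hSc : S ⊆ c
  · -- sum over S equals card of S ∩ R
    have hsum : ∑ i ∈ S, w i = ((S ∩ R).card : ℝ) := by
      rw [← Finset.filter_mem_eq_inter, ← Finset.sum_boole]
      apply Finset.sum_congr rfl
      intro i hi
      rw [hw i, if_neg (by simp [hSc hi])]
    rw [hsum]
    have hcard : (R.card : ℝ) ≤ ((S ∩ R).card : ℝ) ↔ R ⊆ S := by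
      constructor
      · intro h
        have h' : R.card ≤ (S ∩ R).card := by exact_mod_cast h
        have := Finset.eq_of_subset_of_card_le (Finset.inter_subset_right) h'
        rw [← this]
        exact Finset.inter_subset_left
      · intro h
        have : S ∩ R = R := Finset.inter_eq_right.mpr h
        rw [this]
    rw [hcard]
    constructor
    · intro hwin i hiR
      obtain ⟨x, hx, hix⟩ := (hR i).mp hiR
      obtain ⟨a, ha⟩ := Finset.card_eq_one.mp (hLc x hx).2
      have hia : i = a := by rw [ha] at hix; exact Finset.mem_singleton.mp hix
      have hnsub := hwin x hx
      obtain ⟨j, hjS, hjx⟩ : ∃ j ∈ S, j ∉ x := by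
        by_contra hcon
        push_neg at hcon
        exact hnsub hcon
      have hjcx : j ∈ c \ x := Finset.mem_sdiff.mpr ⟨hSc hjS, hjx⟩
      rw [ha, Finset.mem_singleton] at hjcx
      rwa [hia, ← hjcx]
    · intro hRS y hy hSy
      obtain ⟨a, ha⟩ := Finset.card_eq_one.mp (hLc y hy).2
      have haR : a ∈ R := (hR a).mpr ⟨y, hy, by rw [ha]; exact Finset.mem_singleton_self a⟩
      have : a ∈ c \ y := by rw [ha]; exact Finset.mem_singleton_self a
      exact (Finset.mem_sdiff.mp this).2 (hSy (hRS haR))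
  · obtain ⟨i, hiS, hic⟩ : ∃ i ∈ S, i ∉ c := by
      by_contra hcon; push_neg at hcon; exact hSc hcon
    constructor
    · intro _
      calc (R.card : ℝ) = w i := by rw [hw i, if_pos hic]
        _ ≤ ∑ j ∈ S, w j := Finset.single_le_sum (fun j _ => hwnonneg j) hiS
    · intro _ y hy hSy
      exact hic ((hLc y hy).1.1 (hSy hiS))
end

section
/- Let c ⊆ N and let L_c be a nonempty collection of supersets of c each obtained by adding exactly one element to c (i.e., every x ∈ L_c satisfies c ⊂ x and |x \ c| = 1). Let A = ∪_{x ∈ L_c} (x \ c). Then Γ(N, L_c) is weighted: with quota q = 2, weights w_i = 2 for i ∉ c ∪ A, w_i = 1 for i ∈ A, and w_i = 0 for i ∈ c, a coalition S wins in Γ(N, L_c) if and only if Σ_{i ∈ S} w_i ≥ 2. -/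
open Finset

theorem stmt2 {n : ℕ} (c : Finset (Fin n)) (Lc : Finset (Finset (Fin n)))
    (hne : Lc.Nonempty) (hLc : ∀ x ∈ Lc, c ⊂ x ∧ (x \ c).card = 1)
    (A : Finset (Fin n)) (hA : ∀ i, i ∈ A ↔ ∃ x ∈ Lc, i ∈ x \ c)
    (w : Fin n → ℝ)
    (hw : ∀ i, w i = if i ∉ c ∪ A then (2 : ℝ) else if i ∈ A then 1 else 0) :
    ∀ S : Finset (Fin n), wins Lc S ↔ (2 : ℝ) ≤ ∑ i ∈ S, w i := by
  have hAc : ∀ i ∈ A, i ∉ c := by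
    intro i hi
    obtain ⟨x, hx, hix⟩ := (hA i).1 hi
    exact (mem_sdiff.1 hix).2
  have hwnn : ∀ i, 0 ≤ w i := by
    intro i
    rw [hw i]
    split_ifs <;> norm_num
  have hwA : ∀ i ∈ A, w i = 1 := by
    intro i hi
    rw [hw i]
    rw [if_neg (by simp [mem_union, hi]), if_pos hi]
  have hwc : ∀ i ∈ c, w i = 0 := by
    intro i hi
    rw [hw i]
    rw [if_neg (by simp [mem_union, hi]), if_neg (fun h => hAc i h hi)]
  -- y ∈ Lc means y = c ∪ {a} for some a ∈ A
  have hstruct : ∀ y ∈ Lc, ∃ a ∈ A, y = insert a c ∧ a ∉ c := by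
    intro y hy
    obtain ⟨hsub, hcard⟩ := hLc y hy
    obtain ⟨a, ha⟩ := card_eq_one.1 hcard
    have haA : a ∈ A := (hA a).2 ⟨y, hy, by rw [ha]; exact mem_singleton_self a⟩
    have hay : a ∈ y \ c := by rw [ha]; exact mem_singleton_self a
    refine ⟨a, haA, ?_, (mem_sdiff.1 hay).2⟩
    apply Finset.Subset.antisymm
    · intro i hi
      by_cases hic : i ∈ c
      · exact mem_insert_of_mem hic
      · have : i ∈ y \ c := mem_sdiff.2 ⟨hi, hic⟩
        rw [ha, mem_singleton] at this
        exact this ▸ mem_insert_self a c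
    · intro i hi
      rcases mem_insert.1 hi with h | h
      · exact h ▸ (mem_sdiff.1 hay).1
      · exact hsub.1 h
  intro S
  constructor
  · intro hwin
    by_contra hlt
    push_neg at hlt
    -- S \ c ⊆ A
    have hSA : S \ c ⊆ A := by
      intro i hi
      by_contra hiA
      have hiS := (mem_sdiff.1 hi).1
      have : w i = 2 := by
        rw [hw i, if_pos]
        simp [mem_union, (mem_sdiff.1 hi).2, hiA]
      have h2 : (2:ℝ) ≤ ∑ j ∈ S, w j := by
        rw [← this]
        exact Finset.single_le_sum (fun j _ => hwnn j) hiS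
      linarith
    have hsum_sub : ∑ i ∈ S \ c, w i ≤ ∑ i ∈ S, w i :=
      Finset.sum_le_sum_of_subset_of_nonneg (sdiff_subset) (fun i _ _ => hwnn i)
    have hcard1 : (S \ c).card ≤ 1 := by
      by_contra hc2
      push_neg at hc2
      have : ((S \ c).card : ℝ) ≤ ∑ i ∈ S \ c, w i := by
        calc ((S \ c).card : ℝ) = ∑ _i ∈ S \ c, (1:ℝ) := by simp
        _ ≤ ∑ i ∈ S \ c, w i :=
          Finset.sum_le_sum (fun i hi => (hwA i (hSA hi)).ge)
      have : (2:ℝ) ≤ ∑ i ∈ S \ c, w i := le_trans (by exact_mod_cast hc2) this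
      linarith
    interval_cases h : (S \ c).card
    · -- S ⊆ c
      have hSc : S ⊆ c := by
        rw [card_eq_zero, sdiff_eq_empty_iff_subset] at h
        exact h
      obtain ⟨y, hy⟩ := hne
      exact hwin y hy (hSc.trans (hLc y hy).1.1)
    · -- S \ c = {a}
      obtain ⟨a, ha⟩ := card_eq_one.1 h
      have haA : a ∈ A := hSA (ha ▸ mem_singleton_self a)
      obtain ⟨x, hx, hax⟩ := (hA a).1 haA
      obtain ⟨b, hbA, hxb, hbc⟩ := hstruct x hx
      have hab : a = b := by
        have := (mem_sdiff.1 hax).1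
        rw [hxb, mem_insert] at this
        rcases this with h' | h'
        · exact h'
        · exact absurd h' (mem_sdiff.1 hax).2
      apply hwin x hx
      intro i hi
      by_cases hic : i ∈ c
      · rw [hxb]; exact mem_insert_of_mem hic
      · have : i ∈ S \ c := mem_sdiff.2 ⟨hi, hic⟩
        rw [ha, mem_singleton] at this
        rw [hxb, this, hab]
        exact mem_insert_self b c
  · intro hge y hy hSy
    obtain ⟨a, haA, hya, hac⟩ := hstruct y hy
    have : ∑ i ∈ S, w i ≤ ∑ i ∈ y, w i :=
      Finset.sum_le_sum_of_subset_of_nonneg hSy (fun i _ _ => hwnn i)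
    have hysum : ∑ i ∈ y, w i = 1 := by
      rw [hya, Finset.sum_insert hac, hwA a haA, Finset.sum_eq_zero hwc]
      ring
    linarith
end

section
/- Let c ⊆ N and let L_c be an antichain in 2^N (no member contains another) such that every x ∈ L_c has Hamming distance at most 1 from c. Then Γ(N, L_c) is a weighted game. -/
open Finset

variable {n : ℕ}

lemma sum_if_mem (S T : Finset (Fin n)) (k : ℕ) :
    ∑ i ∈ S, (if i ∈ T then k else 0) = (S ∩ T).card * k := by
  rw [Finset.sum_ite_mem, Finset.sum_const, smul_eq_mul]

lemma sum_if_not_mem (S T : Finset (Fin n)) (k : ℕ) :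
    ∑ i ∈ S, (if i ∈ T then 0 else k) = (S \ T).card * k := by
  have h : ∀ i ∈ S, (if i ∈ T then (0:ℕ) else k) = if i ∈ Tᶜ then k else 0 := by
    intro i _; by_cases h : i ∈ T <;> simp [h]
  rw [Finset.sum_congr rfl h, Finset.sum_ite_mem, Finset.sum_const, smul_eq_mul,
    ← Finset.sdiff_eq_inter_compl]

lemma classify_hdist (x c : Finset (Fin n)) (h : hdist x c ≤ 1) :
    x = c ∨ (∃ i ∈ c, x = c.erase i) ∨ ∃ j, j ∉ c ∧ x = insert j c := by
  unfold hdist at h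
  by_cases h1 : x \ c = ∅
  · have hxc : x ⊆ c := sdiff_eq_empty_iff_subset.mp h1
    by_cases h2 : c \ x = ∅
    · exact Or.inl (Finset.Subset.antisymm hxc (sdiff_eq_empty_iff_subset.mp h2))
    · refine Or.inr (Or.inl ?_)
      have hc1 : (c \ x).card = 1 := by
        have := Finset.card_pos.mpr (Finset.nonempty_of_ne_empty h2)
        have h1' : (x \ c).card = 0 := by rw [h1]; simp
        omega
      obtain ⟨i, hi⟩ := Finset.card_eq_one.mp hc1
      refine ⟨i, ?_, ?_⟩
      · have : i ∈ c \ x := by rw [hi]; simp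
        exact (Finset.mem_sdiff.mp this).1
      · rw [Finset.erase_eq, ← hi, Finset.sdiff_sdiff_eq_self hxc]
  · refine Or.inr (Or.inr ?_)
    have hpos := Finset.card_pos.mpr (Finset.nonempty_of_ne_empty h1)
    have h2 : c \ x = ∅ := by
      by_contra h2
      have := Finset.card_pos.mpr (Finset.nonempty_of_ne_empty h2)
      omega
    have hcx : c ⊆ x := sdiff_eq_empty_iff_subset.mp h2
    have hc1 : (x \ c).card = 1 := by omega
    obtain ⟨j, hj⟩ := Finset.card_eq_one.mp hc1
    have hjm : j ∈ x \ c := by rw [hj]; simp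
    refine ⟨j, (Finset.mem_sdiff.mp hjm).2, ?_⟩
    rw [Finset.insert_eq, ← hj, Finset.union_comm, Finset.union_sdiff_of_subset hcx]

lemma isWeighted_of_nat (win : Finset (Fin n) → Prop) (qn : ℕ) (wn : Fin n → ℕ)
    (h : ∀ S, win S ↔ qn ≤ ∑ i ∈ S, wn i) : IsWeighted win := by
  refine ⟨qn, fun i => wn i, Nat.cast_nonneg _, fun i => Nat.cast_nonneg _, fun S => ?_⟩
  rw [h S, ← Nat.cast_sum, Nat.cast_le]

theorem stmt4 {n : ℕ} (c : Finset (Fin n)) (Lc : Finset (Finset (Fin n)))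
    (hanti : IsAntichain (· ⊆ ·) (Lc : Set (Finset (Fin n))))
    (hclose : ∀ x ∈ Lc, hdist x c ≤ 1) :
    IsWeighted (wins Lc) := by
  rcases Lc.eq_empty_or_nonempty with rfl | ⟨x0, hx0⟩
  · exact isWeighted_of_nat _ 0 (fun _ => 0) (fun S => by simp [wins])
  by_cases hc : c ∈ Lc
  · -- Lc = {c}
    have hLc : Lc = {c} := by
      apply Finset.Subset.antisymm
      · intro y hy
        rcases classify_hdist y c (hclose y hy) with rfl | ⟨i, hi, rfl⟩ | ⟨j, hj, rfl⟩
        · simp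
        · exact absurd (Finset.erase_subset i c)
            (hanti (Finset.mem_coe.mpr hy) (Finset.mem_coe.mpr hc)
              (fun h => (Finset.notMem_erase i c) (by rw [h]; exact hi)))
        · exact absurd (Finset.subset_insert j c)
            (hanti (Finset.mem_coe.mpr hc) (Finset.mem_coe.mpr hy)
              (fun h => hj (h ▸ Finset.mem_insert_self j c)))
      · intro y hy; rw [Finset.mem_singleton] at hy; exact hy ▸ hc
    subst hLc
    refine isWeighted_of_nat _ 1 (fun i => if i ∈ c then 0 else 1) (fun S => ?_)
    rw [sum_if_not_mem, mul_one]
    constructor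
    · intro hw
      have : ¬ S ⊆ c := hw c (Finset.mem_singleton_self c)
      exact Finset.card_pos.mpr (Finset.sdiff_nonempty.mpr this)
    · intro hq y hy hsub
      rw [Finset.mem_singleton] at hy; subst hy
      rw [Finset.sdiff_eq_empty_iff_subset.mpr hsub] at hq; simp at hq
  · rcases classify_hdist x0 c (hclose x0 hx0) with rfl | ⟨i0, hi0, hx0e⟩ | ⟨j0, hj0, hx0e⟩
    · exact absurd hx0 hc
    · -- down case: all members are of the form c.erase i
      have hall : ∀ y ∈ Lc, ∃ i ∈ c, y = c.erase i := by
        intro y hy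
        rcases classify_hdist y c (hclose y hy) with rfl | h | ⟨j, hj, rfl⟩
        · exact absurd hy hc
        · exact h
        · exfalso
          refine hanti (Finset.mem_coe.mpr hx0) (Finset.mem_coe.mpr hy) ?_ ?_
          · intro h
            have : i0 ∈ insert j c := Finset.mem_insert_of_mem hi0
            rw [← h, hx0e] at this
            exact Finset.notMem_erase i0 c this
          · rw [hx0e]
            exact (Finset.erase_subset i0 c).trans (Finset.subset_insert j c)
      set A := c.filter (fun i => c.erase i ∈ Lc) with hA
      have hAc : A ⊆ c := Finset.filter_subset _ _
      have hAmem : ∀ i ∈ A, c.erase i ∈ Lc := fun i hi => (Finset.mem_filter.mp hi).2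
      have hLcA : ∀ y ∈ Lc, ∃ i ∈ A, y = c.erase i := by
        intro y hy
        obtain ⟨i, hi, rfl⟩ := hall y hy
        exact ⟨i, Finset.mem_filter.mpr ⟨hi, hy⟩, rfl⟩
      have hApos : A.Nonempty := by
        obtain ⟨i, hi, _⟩ := hLcA x0 hx0; exact ⟨i, hi⟩
      refine isWeighted_of_nat _ A.card
        (fun i => (if i ∈ A then 1 else 0) + (if i ∈ c then 0 else A.card)) (fun S => ?_)
      rw [Finset.sum_add_distrib, sum_if_mem, sum_if_not_mem, mul_one]
      constructor
      · intro hw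
        by_cases hSc : S ⊆ c
        · have hAs : A ⊆ S := by
            intro i hi
            by_contra hiS
            exact hw (c.erase i) (hAmem i hi) (Finset.subset_erase.mpr ⟨hSc, hiS⟩)
          have h1 : S ∩ A = A := Finset.inter_eq_right.mpr hAs
          rw [h1]; omega
        · have h1 : 1 ≤ (S \ c).card :=
            Finset.card_pos.mpr (Finset.sdiff_nonempty.mpr hSc)
          have := Nat.mul_le_mul_right A.card h1
          omega
      · intro hq y hy hsub
        obtain ⟨i, hi, rfl⟩ := hLcA y hy
        obtain ⟨hSc, hiS⟩ := Finset.subset_erase.mp hsub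
        have he : S \ c = ∅ := Finset.sdiff_eq_empty_iff_subset.mpr hSc
        have hsubA : S ∩ A ⊆ A.erase i := by
          intro x hx
          rw [Finset.mem_erase]
          exact ⟨fun h => hiS (h ▸ (Finset.mem_inter.mp hx).1), (Finset.mem_inter.mp hx).2⟩
        have h2 : (S ∩ A).card ≤ (A.erase i).card := Finset.card_le_card hsubA
        have h3 : (A.erase i).card = A.card - 1 := Finset.card_erase_of_mem hi
        have h4 : 1 ≤ A.card := Finset.card_pos.mpr ⟨i, hi⟩
        rw [he] at hq
        simp at hq
        omega
    · -- up case: all members are of the form insert j c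
      have hall : ∀ y ∈ Lc, ∃ j, j ∉ c ∧ y = insert j c := by
        intro y hy
        rcases classify_hdist y c (hclose y hy) with rfl | ⟨i, hi, rfl⟩ | h
        · exact absurd hy hc
        · exfalso
          refine hanti (Finset.mem_coe.mpr hy) (Finset.mem_coe.mpr hx0) ?_ ?_
          · intro h
            have : i ∈ insert j0 c := Finset.mem_insert_of_mem hi
            rw [← hx0e, ← h] at this
            exact Finset.notMem_erase i c this
          · rw [hx0e]
            exact (Finset.erase_subset i c).trans (Finset.subset_insert j0 c)
        · exact h
      set B := Finset.univ.filter (fun j => j ∉ c ∧ insert j c ∈ Lc) with hB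
      have hBmem : ∀ j ∈ B, j ∉ c ∧ insert j c ∈ Lc := fun j hj => (Finset.mem_filter.mp hj).2
      have hLcB : ∀ y ∈ Lc, ∃ j ∈ B, y = insert j c := by
        intro y hy
        obtain ⟨j, hj, rfl⟩ := hall y hy
        exact ⟨j, Finset.mem_filter.mpr ⟨Finset.mem_univ j, hj, hy⟩, rfl⟩
      have hBpos : B.Nonempty := by
        obtain ⟨j, hj, _⟩ := hLcB x0 hx0; exact ⟨j, hj⟩
      refine isWeighted_of_nat _ 2
        (fun j => (if j ∈ B then 1 else 0) + (if j ∈ c ∪ B then 0 else 2)) (fun S => ?_)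
      rw [Finset.sum_add_distrib, sum_if_mem, sum_if_not_mem, mul_one]
      constructor
      · intro hw
        by_contra hq
        push_neg at hq
        have h1 : (S \ (c ∪ B)).card = 0 := by omega
        have h2 : (S ∩ B).card ≤ 1 := by omega
        have hScB : S ⊆ c ∪ B := Finset.sdiff_eq_empty_iff_subset.mp
          (Finset.card_eq_zero.mp h1)
        rcases (S ∩ B).eq_empty_or_nonempty with he | hne
        · obtain ⟨j0', hj0'⟩ := hBpos
          refine hw (insert j0' c) (hBmem j0' hj0').2 ?_
          intro x hx
          rcases Finset.mem_union.mp (hScB hx) with h | h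
          · exact Finset.mem_insert_of_mem h
          · exact absurd (Finset.mem_inter.mpr ⟨hx, h⟩) (by rw [he]; simp)
        · have hcard : (S ∩ B).card = 1 := le_antisymm h2 (Finset.card_pos.mpr hne)
          obtain ⟨j, hj⟩ := Finset.card_eq_one.mp hcard
          have hjB : j ∈ B := by
            have : j ∈ S ∩ B := by rw [hj]; simp
            exact (Finset.mem_inter.mp this).2
          refine hw (insert j c) (hBmem j hjB).2 ?_
          intro x hx
          rcases Finset.mem_union.mp (hScB hx) with h | h
          · exact Finset.mem_insert_of_mem h
          · have : x ∈ S ∩ B := Finset.mem_inter.mpr ⟨hx, h⟩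
            rw [hj, Finset.mem_singleton] at this
            exact this ▸ Finset.mem_insert_self j c
      · intro hq y hy hsub
        obtain ⟨j, hj, rfl⟩ := hLcB y hy
        have hjc : j ∉ c := (hBmem j hj).1
        have h1 : S \ (c ∪ B) = ∅ := by
          rw [Finset.eq_empty_iff_forall_notMem]
          intro x hx
          obtain ⟨hxS, hxcB⟩ := Finset.mem_sdiff.mp hx
          rcases Finset.mem_insert.mp (hsub hxS) with rfl | h
          · exact hxcB (Finset.mem_union_right _ hj)
          · exact hxcB (Finset.mem_union_left _ h)
        have h2 : S ∩ B ⊆ {j} := by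
          intro x hx
          obtain ⟨hxS, hxB⟩ := Finset.mem_inter.mp hx
          rcases Finset.mem_insert.mp (hsub hxS) with rfl | h
          · exact Finset.mem_singleton.mpr rfl
          · exact absurd h (hBmem x hxB).1
        have h3 : (S ∩ B).card ≤ 1 := by
          have := Finset.card_le_card h2; simpa using this
        rw [h1] at hq
        simp at hq
        omega
end

section
/- For every positive integer n, the maximum dimension d_n of a simple game with n players satisfies d_n ≤ K_n, where K_n is the minimum size of a binary covering code of length n with covering radius 1 (i.e., the minimum size of a set C ⊆ 2^N such that every subset of N is within Hamming distance 1 of some member of C). -/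
open Finset

lemma ball_char {n : ℕ} {c T : Finset (Fin n)} (h : hdist T c ≤ 1) :
    T = c ∨ (∃ i ∉ c, T = insert i c) ∨ (∃ j ∈ c, T = c.erase j) := by
  unfold hdist at h
  rcases Nat.le_one_iff_eq_zero_or_eq_one.mp h with h0 | h1
  · left
    have h1 : (T \ c) = ∅ := card_eq_zero.mp (by omega)
    have h2 : (c \ T) = ∅ := card_eq_zero.mp (by omega)
    exact Subset.antisymm (sdiff_eq_empty_iff_subset.mp h1) (sdiff_eq_empty_iff_subset.mp h2)
  · rcases Nat.add_eq_one_iff.mp h1 with ⟨ha, hb⟩ | ⟨ha, hb⟩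
    · right; right
      obtain ⟨j, hj⟩ := card_eq_one.mp hb
      have hTc : T ⊆ c := sdiff_eq_empty_iff_subset.mp (card_eq_zero.mp ha)
      have hjc : j ∈ c ∧ j ∉ T := by have := hj ▸ (mem_sdiff (s := c) (t := T) (a := j)); simp at this; tauto
      refine ⟨j, hjc.1, ?_⟩
      ext x
      simp only [mem_erase]
      constructor
      · intro hx; exact ⟨fun e => hjc.2 (e ▸ hx), hTc hx⟩
      · intro ⟨hxj, hxc⟩
        by_contra hxT
        have : x ∈ c \ T := mem_sdiff.mpr ⟨hxc, hxT⟩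
        rw [hj] at this; simp at this; exact hxj this
    · right; left
      obtain ⟨i, hi⟩ := card_eq_one.mp ha
      have hcT : c ⊆ T := sdiff_eq_empty_iff_subset.mp (card_eq_zero.mp hb)
      have hic : i ∈ T ∧ i ∉ c := by have := hi ▸ (mem_sdiff (s := T) (t := c) (a := i)); simp at this; tauto
      refine ⟨i, hic.2, ?_⟩
      ext x
      simp only [mem_insert]
      constructor
      · intro hx
        by_cases hxc : x ∈ c
        · right; exact hxc
        · left
          have : x ∈ T \ c := mem_sdiff.mpr ⟨hx, hxc⟩
          rw [hi] at this; simpa using this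
      · rintro (rfl | hx)
        · exact hic.1
        · exact hcT hx

lemma sum_split {n : ℕ} (a b : ℝ) (P Q S : Finset (Fin n)) :
    ∑ i ∈ S, ((if i ∈ P then a else 0) + (if i ∈ Q then 0 else b))
      = a * (S ∩ P).card + b * (S \ Q).card := by
  rw [Finset.sum_add_distrib]
  congr 1
  · rw [Finset.sum_ite_mem, Finset.sum_const]
    simp [mul_comm]
  · rw [Finset.sum_ite, Finset.sum_const_zero, zero_add, Finset.sum_const]
    rw [Finset.sdiff_eq_filter]
    simp [mul_comm]

lemma weighted_of_ball {n : ℕ} (c : Finset (Fin n)) (L : Finset (Finset (Fin n)))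
    (hball : ∀ T ∈ L, hdist T c ≤ 1)
    (hanti : ∀ T ∈ L, ∀ T' ∈ L, T ⊆ T' → T = T') :
    IsWeighted (wins L) := by
  classical
  rcases L.eq_empty_or_nonempty with rfl | hLne
  · exact ⟨0, fun _ => 0, le_refl 0, fun i => le_refl 0,
      fun S => by simp [wins]⟩
  by_cases hB : ∃ j ∈ c, c.erase j ∈ L
  · -- B case: all elements of L are of the form c.erase j
    set B := c.filter (fun j => c.erase j ∈ L) with hBdef
    have hBc : B ⊆ c := filter_subset _ _
    -- every element of L has the form c.erase j with j ∈ B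
    have hLchar : ∀ T ∈ L, ∃ j ∈ B, T = c.erase j := by
      intro T hT
      obtain ⟨j0, hj0c, hj0L⟩ := hB
      rcases ball_char (hball T hT) with heq | ⟨i, hic, rfl⟩ | ⟨j, hjc, rfl⟩
      · exfalso
        rw [heq] at hT
        have e : c.erase j0 = c := hanti _ hj0L _ hT (erase_subset _ _)
        have hmem : j0 ∈ c.erase j0 := by rw [e]; exact hj0c
        exact notMem_erase j0 c hmem
      · exfalso
        have e : c.erase j0 = insert i c :=
          hanti _ hj0L _ hT ((erase_subset _ _).trans (subset_insert _ _))
        have hmem : j0 ∈ c.erase j0 := by rw [e]; exact mem_insert_of_mem hj0c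
        exact notMem_erase j0 c hmem
      · exact ⟨j, mem_filter.mpr ⟨hjc, hT⟩, rfl⟩
    have hwins : ∀ S, wins L S ↔ (S ⊆ c → B ⊆ S) := by
      intro S
      constructor
      · intro h hSc j hjB
        by_contra hjS
        have hjc := (mem_filter.mp hjB)
        exact h _ hjc.2 (subset_erase.mpr ⟨hSc, hjS⟩)
      · intro h T hT hST
        obtain ⟨j, hjB, rfl⟩ := hLchar T hT
        obtain ⟨hSc, hjS⟩ := subset_erase.mp hST
        exact hjS (h hSc hjB)
    refine ⟨(B.card : ℝ),
      fun i => (if i ∈ B then (1:ℝ) else 0) + (if i ∈ c then 0 else (B.card : ℝ)),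
      by positivity, fun i => by positivity, fun S => ?_⟩
    rw [hwins, sum_split, one_mul]
    have key : (S ⊆ c → B ⊆ S) ↔ (B.card ≤ (S ∩ B).card + B.card * (S \ c).card) := by
      by_cases hSc : S ⊆ c
      · have h0 : (S \ c).card = 0 := by simp [sdiff_eq_empty_iff_subset.mpr hSc]
        rw [h0, mul_zero, add_zero]
        constructor
        · intro h
          exact card_le_card (subset_inter (h hSc) (Subset.refl B))
        · intro h _
          have heq := eq_of_subset_of_card_le inter_subset_right h
          exact fun x hx => mem_of_mem_inter_left (heq ▸ hx)
      · have h1 : 1 ≤ (S \ c).card := by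
          rcases (sdiff_nonempty.mpr hSc) with ⟨x, hx⟩
          exact card_pos.mpr ⟨x, hx⟩
        constructor
        · intro _
          calc B.card = B.card * 1 := by ring
            _ ≤ B.card * (S \ c).card := Nat.mul_le_mul_left _ h1
            _ ≤ (S ∩ B).card + B.card * (S \ c).card := Nat.le_add_left _ _
        · intro _ h; exact absurd h hSc
    rw [key]
    push_cast
    constructor
    · intro h; exact_mod_cast h
    · intro h; exact_mod_cast h
  · -- A case
    push_neg at hB
    set A := univ.filter (fun i => i ∉ c ∧ insert i c ∈ L) with hAdef
    have hAc : ∀ i ∈ A, i ∉ c := fun i hi => ((mem_filter.mp hi).2).1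
    have hlose : ∀ S, (¬ wins L S) ↔ (S \ c ⊆ A ∧ (S \ c).card ≤ 1) := by
      intro S
      constructor
      · intro h
        simp only [wins, not_forall] at h
        obtain ⟨T, hT, hST⟩ := h
        simp only [not_not] at hST
        rcases ball_char (hball T hT) with rfl | ⟨i, hic, rfl⟩ | ⟨j, hjc, rfl⟩
        · have : S \ T = ∅ := sdiff_eq_empty_iff_subset.mpr hST
          simp [this]
        · have hiA : i ∈ A := mem_filter.mpr ⟨mem_univ i, hic, hT⟩
          have hsub : S \ c ⊆ {i} := by
            intro x hx
            rcases mem_insert.mp (hST (mem_sdiff.mp hx).1) with h1 | h2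
            · simpa using h1
            · exact absurd h2 (mem_sdiff.mp hx).2
          constructor
          · exact hsub.trans (singleton_subset_iff.mpr hiA)
          · calc (S \ c).card ≤ ({i} : Finset (Fin n)).card := card_le_card hsub
              _ = 1 := card_singleton i
        · exact absurd hjc (hB j · |>.elim hT)
      · intro ⟨hsub, hcard⟩
        simp only [wins, not_forall, not_not]
        -- S \ c is empty or a singleton {i} with i ∈ A
        rcases (S \ c).eq_empty_or_nonempty with he | hne
        · have hSc : S ⊆ c := sdiff_eq_empty_iff_subset.mp he
          obtain ⟨T, hT⟩ := hLne
          refine ⟨T, hT, ?_⟩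
          rcases ball_char (hball T hT) with rfl | ⟨i, hic, rfl⟩ | ⟨j, hjc, rfl⟩
          · exact hSc
          · exact hSc.trans (subset_insert _ _)
          · exact absurd hjc (hB j · |>.elim hT)
        · have h1 : (S \ c).card = 1 := le_antisymm hcard (card_pos.mpr hne)
          obtain ⟨i, hi⟩ := card_eq_one.mp h1
          have hiA : i ∈ A := hsub (hi ▸ mem_singleton_self i)
          refine ⟨insert i c, ((mem_filter.mp hiA).2).2, ?_⟩
          intro x hx
          by_cases hxc : x ∈ c
          · exact mem_insert_of_mem hxc
          · have : x ∈ S \ c := mem_sdiff.mpr ⟨hx, hxc⟩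
            rw [hi] at this
            exact mem_insert.mpr (Or.inl (by simpa using this))
    refine ⟨(2 : ℝ),
      fun i => (if i ∈ A then (1:ℝ) else 0) + (if i ∈ c ∪ A then 0 else 2),
      by norm_num, fun i => by positivity, fun S => ?_⟩
    rw [sum_split, one_mul]
    have hwins : wins L S ↔ ¬ (S \ c ⊆ A ∧ (S \ c).card ≤ 1) := by
      rw [← hlose]; tauto
    rw [hwins]
    have hsd : S \ (c ∪ A) = (S \ c) \ A := by ext x; simp; tauto
    have hia : S ∩ A = (S \ c) ∩ A := by
      ext x; simp only [mem_inter, mem_sdiff]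
      constructor
      · intro ⟨h1, h2⟩; exact ⟨⟨h1, hAc x h2⟩, h2⟩
      · tauto
    have hcards : ((S \ c) \ A).card + ((S \ c) ∩ A).card = (S \ c).card :=
      card_sdiff_add_card_inter _ _
    have hsubiff : S \ c ⊆ A ↔ ((S \ c) \ A).card = 0 := by
      rw [card_eq_zero, sdiff_eq_empty_iff_subset]
    have key : (¬ (S \ c ⊆ A ∧ (S \ c).card ≤ 1)) ↔
        2 ≤ (S ∩ A).card + 2 * (S \ (c ∪ A)).card := by
      rw [hsubiff, hsd, hia]
      omega
    rw [key]
    push_cast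
    constructor
    · intro h; exact_mod_cast h
    · intro h; exact_mod_cast h

lemma maxLosing_antichain {n : ℕ} (G : SimpleGame n) {T T' : Finset (Fin n)}
    (hT : T ∈ maxLosing G) (hT' : T' ∈ maxLosing G) (h : T ⊆ T') : T = T' := by
  by_contra hne
  exact hT'.1 (hT.2 T' (ssubset_of_subset_of_ne h hne))

lemma win_iff_maxLosing {n : ℕ} (G : SimpleGame n) (S : Finset (Fin n)) :
    G.win S ↔ ∀ T ∈ maxLosing G, ¬ S ⊆ T := by
  classical
  constructor
  · intro hw T hT hST
    exact hT.1 (G.mono S T hST hw)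
  · intro h
    by_contra hw
    -- find a maximal losing superset of S
    have hne : (univ.filter (fun T : Finset (Fin n) => S ⊆ T ∧ ¬ G.win T)).Nonempty :=
      ⟨S, mem_filter.mpr ⟨mem_univ S, Subset.refl S, hw⟩⟩
    obtain ⟨T, hTmem, hTmax⟩ := Finset.exists_max_image _ (fun T => T.card) hne
    have hTf := mem_filter.mp hTmem
    refine h T ⟨hTf.2.2, ?_⟩ hTf.2.1
    intro T' hT'
    by_contra hwin'
    have : T' ∈ univ.filter (fun T : Finset (Fin n) => S ⊆ T ∧ ¬ G.win T) :=
      mem_filter.mpr ⟨mem_univ T', hTf.2.1.trans hT'.subset, hwin'⟩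
    have hle := hTmax T' this
    have := card_lt_card hT'
    omega

lemma dim_le_code {n : ℕ} (G : SimpleGame n) (C : Finset (Finset (Fin n)))
    (hC : IsCoveringCode C) : gameDim G.win ≤ C.card := by
  classical
  apply Nat.sInf_le
  refine ⟨fun i => wins (univ.filter (fun T : Finset (Fin n) =>
      T ∈ maxLosing G ∧ hdist T ((C.equivFin.symm i : C) : Finset (Fin n)) ≤ 1)), ?_, ?_⟩
  · intro i
    set c : Finset (Fin n) := ((C.equivFin.symm i : C) : Finset (Fin n))
    apply weighted_of_ball c
    · intro T hT; exact (mem_filter.mp hT).2.2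
    · intro T hT T' hT' hsub
      exact maxLosing_antichain G (mem_filter.mp hT).2.1 (mem_filter.mp hT').2.1 hsub
  · intro S
    rw [win_iff_maxLosing]
    constructor
    · intro h i T hT
      exact h T (mem_filter.mp hT).2.1
    · intro h T hT
      obtain ⟨c, hcC, hdc⟩ := hC T
      have hh := h (C.equivFin ⟨c, hcC⟩)
      simp only [Equiv.symm_apply_apply] at hh
      exact hh T (mem_filter.mpr ⟨mem_univ T, hT, hdc⟩)

lemma K_exists (n : ℕ) : ∃ C : Finset (Finset (Fin n)), IsCoveringCode C ∧ C.card = K n := by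
  have hmem : K n ∈ {k | ∃ C : Finset (Finset (Fin n)), IsCoveringCode C ∧ C.card = k} := by
    apply Nat.sInf_mem
    exact ⟨(univ : Finset (Finset (Fin n))).card, univ,
      fun x => ⟨x, mem_univ x, by simp [hdist]⟩, rfl⟩
  exact hmem

theorem stmt6 {n : ℕ} (hn : 1 ≤ n) (G : SimpleGame n) :
    gameDim G.win ≤ K n := by
  obtain ⟨C, hC, hcard⟩ := K_exists n
  exact hcard ▸ dim_le_code G C hC
end

section
/- K_4 = 4: the set C = {∅, {4}, {1,2,3}, {1,2,3,4}} is a binary covering code of length 4 with covering radius 1, and no covering code of length 4 and radius 1 has fewer than 4 codewords. -/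
open Finset

lemma ball_card (c : Finset (Fin 4)) :
    (Finset.univ.filter (fun x : Finset (Fin 4) => hdist x c ≤ 1)).card = 5 := by
  revert c; decide

lemma lower_bound (C : Finset (Finset (Fin 4))) (h : IsCoveringCode C) : 4 ≤ C.card := by
  have hsub : (Finset.univ : Finset (Finset (Fin 4))) ⊆
      C.biUnion (fun c => Finset.univ.filter (fun x => hdist x c ≤ 1)) := by
    intro x _
    obtain ⟨c, hc, hd⟩ := h x
    exact Finset.mem_biUnion.2 ⟨c, hc, Finset.mem_filter.2 ⟨Finset.mem_univ _, hd⟩⟩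
  have h1 : (16 : ℕ) ≤ (C.biUnion (fun c => Finset.univ.filter (fun x => hdist x c ≤ 1))).card := by
    have := Finset.card_le_card hsub
    simpa using this
  have h2 : (C.biUnion (fun c => Finset.univ.filter (fun x => hdist x c ≤ 1))).card ≤ 5 * C.card := by
    calc (C.biUnion (fun c => Finset.univ.filter (fun x => hdist x c ≤ 1))).card
        ≤ ∑ c ∈ C, (Finset.univ.filter (fun x => hdist x c ≤ 1)).card :=
          Finset.card_biUnion_le
      _ = ∑ c ∈ C, 5 := by simp [ball_card]
      _ = 5 * C.card := by rw [Finset.sum_const, smul_eq_mul, mul_comm]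
  omega

theorem stmt10 :
    IsCoveringCode ({∅, {3}, {0, 1, 2}, Finset.univ} : Finset (Finset (Fin 4))) ∧
    (∀ C : Finset (Finset (Fin 4)), IsCoveringCode C → 4 ≤ C.card) ∧
    K 4 = 4 := by
  have hcov : IsCoveringCode ({∅, {3}, {0, 1, 2}, Finset.univ} : Finset (Finset (Fin 4))) := by
    intro x; revert x; decide
  refine ⟨hcov, lower_bound, ?_⟩
  have hmem : (4 : ℕ) ∈ {k | ∃ C : Finset (Finset (Fin 4)), IsCoveringCode C ∧ C.card = k} :=
    ⟨_, hcov, by decide⟩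
  apply le_antisymm
  · exact Nat.sInf_le hmem
  · apply le_csInf ⟨4, hmem⟩
    rintro k ⟨C, hC, rfl⟩
    exact lower_bound C hC
end

section
/- For every n ≥ 1 there exists a binary covering code of length n with covering radius 1 of size at most (ln(n+1) + 1) · 2^n/(n+1); hence K_n ≤ (ln(n+1)+1) · 2^n/(n+1). -/
open Finset

namespace Stmt11Aux

theorem zmod2_eq_zero (a : ZMod 2) (h : a ≠ 1) : a = 0 := by
  have key : ((a.val : ℕ) : ZMod 2) = a := by rw [ZMod.natCast_val, ZMod.cast_id]
  have hlt : a.val < 2 := ZMod.val_lt a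
  have h2 : a.val ≠ 1 := fun hv => h (by rw [← key, hv, Nat.cast_one])
  have h0 : a.val = 0 := by omega
  rw [← key, h0, Nat.cast_zero]

theorem zmod2_eq_one (a : ZMod 2) (h : a ≠ 0) : a = 1 := by
  have key : ((a.val : ℕ) : ZMod 2) = a := by rw [ZMod.natCast_val, ZMod.cast_id]
  have hlt : a.val < 2 := ZMod.val_lt a
  have h2 : a.val ≠ 0 := fun hv => h (by rw [← key, hv, Nat.cast_zero])
  have h0 : a.val = 1 := by omega
  rw [← key, h0, Nat.cast_one]

theorem addself {m : ℕ} (v : Fin m → ZMod 2) : v + v = 0 := by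
  funext j
  exact CharTwo.add_self_eq_zero (v j)

theorem symm_val {m : ℕ} (a : Fin (2 ^ m)) (b : Fin m) :
    (finFunctionFinEquiv.symm a b : ℕ) = (a : ℕ) / 2 ^ (b : ℕ) % 2 := by
  simp [finFunctionFinEquiv]

/-- The label (parity-check column) of coordinate `i`: binary digits of `i+1`. -/
def lab (n : ℕ) (i : Fin n) : Fin (Nat.log 2 (n + 1)) → ZMod 2 :=
  fun j => (((i.val + 1) / 2 ^ (j : ℕ)) % 2 : ℕ)

/-- The syndrome of a coalition. -/
def syn (n : ℕ) (x : Finset (Fin n)) : Fin (Nat.log 2 (n + 1)) → ZMod 2 :=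
  ∑ i ∈ x, lab n i

/-- `Fin 2`-valued version of a syndrome vector. -/
def tfun {M : ℕ} (s : Fin M → ZMod 2) : Fin M → Fin 2 :=
  fun j => ⟨(s j).val, ZMod.val_lt (s j)⟩

theorem lab_surj {n : ℕ} (hn : 1 ≤ n) (s : Fin (Nat.log 2 (n + 1)) → ZMod 2)
    (hs : s ≠ 0) : ∃ i : Fin n, lab n i = s := by
  obtain ⟨j, hj⟩ : ∃ j, s j ≠ 0 := by
    by_contra h
    push_neg at h
    exact hs (funext h)
  have hsj : s j = 1 := zmod2_eq_one _ hj
  have htj : ((tfun s j : Fin 2) : ℕ) = 1 := by simp only [tfun, hsj]; rfl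
  have hapos : 1 ≤ ((finFunctionFinEquiv (tfun s) : Fin (2 ^ Nat.log 2 (n + 1))) : ℕ) := by
    have hle : ((tfun s j : Fin 2) : ℕ) * 2 ^ (j : ℕ)
        ≤ ∑ i, ((tfun s i : Fin 2) : ℕ) * 2 ^ (i : ℕ) :=
      Finset.single_le_sum (f := fun i => ((tfun s i : Fin 2) : ℕ) * 2 ^ (i : ℕ))
        (fun i _ => Nat.zero_le _) (Finset.mem_univ j)
    have heq : ((finFunctionFinEquiv (tfun s) : Fin (2 ^ Nat.log 2 (n + 1))) : ℕ)
        = ∑ i, ((tfun s i : Fin 2) : ℕ) * 2 ^ (i : ℕ) := finFunctionFinEquiv_apply (tfun s)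
    rw [heq]
    calc 1 ≤ 2 ^ (j : ℕ) := Nat.one_le_two_pow
      _ = ((tfun s j : Fin 2) : ℕ) * 2 ^ (j : ℕ) := by rw [htj, one_mul]
      _ ≤ _ := hle
  have haub : ((finFunctionFinEquiv (tfun s) : Fin (2 ^ Nat.log 2 (n + 1))) : ℕ) ≤ n := by
    have h1 := (finFunctionFinEquiv (tfun s) : Fin (2 ^ Nat.log 2 (n + 1))).isLt
    have h2 : 2 ^ Nat.log 2 (n + 1) ≤ n + 1 := Nat.pow_log_le_self 2 (by omega)
    omega
  refine ⟨⟨((finFunctionFinEquiv (tfun s) : Fin (2 ^ Nat.log 2 (n + 1))) : ℕ) - 1, by omega⟩,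
    funext fun k => ?_⟩
  show ((((((finFunctionFinEquiv (tfun s) : Fin (2 ^ Nat.log 2 (n + 1))) : ℕ) - 1 + 1)
      / 2 ^ (k : ℕ) % 2 : ℕ)) : ZMod 2) = s k
  have h1 : ((finFunctionFinEquiv (tfun s) : Fin (2 ^ Nat.log 2 (n + 1))) : ℕ) - 1 + 1
      = ((finFunctionFinEquiv (tfun s) : Fin (2 ^ Nat.log 2 (n + 1))) : ℕ) := by omega
  have h2 : finFunctionFinEquiv.symm (finFunctionFinEquiv (tfun s)) = tfun s :=
    Equiv.symm_apply_apply _ _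
  have h3 : ((finFunctionFinEquiv.symm (finFunctionFinEquiv (tfun s)) k : Fin 2) : ℕ)
      = ((finFunctionFinEquiv (tfun s) : Fin (2 ^ Nat.log 2 (n + 1))) : ℕ) / 2 ^ (k : ℕ) % 2 :=
    symm_val _ k
  rw [h1, ← h3, h2]
  show (((s k).val : ℕ) : ZMod 2) = s k
  rw [ZMod.natCast_val, ZMod.cast_id]

theorem lab_basis {n : ℕ} (j : Fin (Nat.log 2 (n + 1))) (h : 2 ^ (j : ℕ) - 1 < n) :
    lab n ⟨2 ^ (j : ℕ) - 1, h⟩ = fun k => if k = j then 1 else 0 := by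
  funext k
  have h1 : 2 ^ (j : ℕ) - 1 + 1 = 2 ^ (j : ℕ) := by
    have := Nat.one_le_two_pow (n := (j : ℕ)); omega
  show (((2 ^ (j : ℕ) - 1 + 1) / 2 ^ (k : ℕ) % 2 : ℕ) : ZMod 2) = _
  rw [h1]
  rcases lt_trichotomy (k : ℕ) (j : ℕ) with hlt | heq | hgt
  · have hne : k ≠ j := fun hh => by rw [hh] at hlt; omega
    rw [if_neg hne]
    have hdiv : 2 ^ (j : ℕ) / 2 ^ (k : ℕ) = 2 ^ ((j : ℕ) - (k : ℕ)) :=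
      Nat.pow_div (by omega) (by norm_num)
    rw [hdiv]
    have h2 : (j : ℕ) - (k : ℕ) ≠ 0 := by omega
    obtain ⟨d, hd⟩ := Nat.exists_eq_succ_of_ne_zero h2
    rw [hd, pow_succ, Nat.mul_mod_left]
    exact Nat.cast_zero
  · have hkj : k = j := Fin.ext heq
    rw [if_pos hkj, heq, Nat.div_self (by positivity)]
    norm_num
  · have hne : k ≠ j := fun hh => by rw [hh] at hgt; omega
    rw [if_neg hne]
    have hdiv : 2 ^ (j : ℕ) / 2 ^ (k : ℕ) = 0 :=
      Nat.div_eq_of_lt (Nat.pow_lt_pow_right (by norm_num) hgt)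
    rw [hdiv]
    norm_num

theorem syn_symmDiff {n : ℕ} (x y : Finset (Fin n)) :
    syn n (symmDiff x y) = syn n x + syn n y := by
  have hsub : x ∩ y ⊆ x ∪ y := (Finset.inter_subset_left).trans Finset.subset_union_left
  have h1 : (∑ i ∈ (x ∪ y) \ (x ∩ y), lab n i) + ∑ i ∈ x ∩ y, lab n i
      = ∑ i ∈ x ∪ y, lab n i := Finset.sum_sdiff hsub
  have h2 : (∑ i ∈ x ∪ y, lab n i) + ∑ i ∈ x ∩ y, lab n i
      = (∑ i ∈ x, lab n i) + ∑ i ∈ y, lab n i := Finset.sum_union_inter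
  have h3 : (∑ i ∈ x ∩ y, lab n i) + ∑ i ∈ x ∩ y, lab n i = 0 := addself _
  have hsd : symmDiff x y = (x ∪ y) \ (x ∩ y) := symmDiff_eq_sup_sdiff_inf x y
  show (∑ i ∈ symmDiff x y, lab n i) = _
  rw [hsd]
  calc (∑ i ∈ (x ∪ y) \ (x ∩ y), lab n i)
      = (∑ i ∈ (x ∪ y) \ (x ∩ y), lab n i)
        + ((∑ i ∈ x ∩ y, lab n i) + ∑ i ∈ x ∩ y, lab n i) := by rw [h3, add_zero]
    _ = ((∑ i ∈ (x ∪ y) \ (x ∩ y), lab n i) + ∑ i ∈ x ∩ y, lab n i)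
        + ∑ i ∈ x ∩ y, lab n i := by rw [add_assoc]
    _ = (∑ i ∈ x ∪ y, lab n i) + ∑ i ∈ x ∩ y, lab n i := by rw [h1]
    _ = _ := h2

/-- The "basis" coalition realizing syndrome `s`. -/
def iot {n : ℕ} (hb : ∀ j : Fin (Nat.log 2 (n + 1)), 2 ^ (j : ℕ) - 1 < n)
    (s : Fin (Nat.log 2 (n + 1)) → ZMod 2) : Finset (Fin n) :=
  (Finset.univ.filter (fun j => s j = 1)).image (fun (j : Fin (Nat.log 2 (n + 1))) => (⟨2 ^ (j : ℕ) - 1, hb j⟩ : Fin n))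

theorem syn_iot {n : ℕ} (hb : ∀ j : Fin (Nat.log 2 (n + 1)), 2 ^ (j : ℕ) - 1 < n)
    (s : Fin (Nat.log 2 (n + 1)) → ZMod 2) : syn n (iot hb s) = s := by
  have hinj : ∀ j₁ ∈ Finset.univ.filter (fun j => s j = 1),
      ∀ j₂ ∈ Finset.univ.filter (fun j => s j = 1),
      (⟨2 ^ (j₁ : ℕ) - 1, hb j₁⟩ : Fin n) = ⟨2 ^ (j₂ : ℕ) - 1, hb j₂⟩ → j₁ = j₂ := by
    intro j₁ _ j₂ _ hj
    have h1 : 2 ^ (j₁ : ℕ) - 1 = 2 ^ (j₂ : ℕ) - 1 := congrArg Fin.val hj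
    have ha : 1 ≤ 2 ^ (j₁ : ℕ) := Nat.one_le_two_pow
    have hb' : 1 ≤ 2 ^ (j₂ : ℕ) := Nat.one_le_two_pow
    have h2 : 2 ^ (j₁ : ℕ) = 2 ^ (j₂ : ℕ) := by omega
    exact Fin.ext (Nat.pow_right_injective le_rfl h2)
  show (∑ i ∈ iot hb s, lab n i) = s
  rw [iot, Finset.sum_image hinj]
  funext k
  rw [Finset.sum_apply]
  have hterm : ∀ j ∈ Finset.univ.filter (fun j => s j = 1),
      lab n ⟨2 ^ (j : ℕ) - 1, hb j⟩ k = if k = j then 1 else 0 := by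
    intro j _
    rw [lab_basis j (hb j)]
  rw [Finset.sum_congr rfl hterm, Finset.sum_ite_eq]
  by_cases hk : s k = 1
  · rw [if_pos (by simp [hk]), hk]
  · rw [if_neg (by simp [hk]), zmod2_eq_zero _ hk]

/-- The code: coalitions with zero syndrome. -/
noncomputable def code (n : ℕ) : Finset (Finset (Fin n)) :=
  Finset.univ.filter (fun x => syn n x = 0)

theorem code_covers {n : ℕ} (hn : 1 ≤ n) : IsCoveringCode (code n) := by
  classical
  intro x
  by_cases hx : syn n x = 0
  · exact ⟨x, Finset.mem_filter.mpr ⟨Finset.mem_univ _, hx⟩, by simp [hdist]⟩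
  · obtain ⟨i, hi⟩ := lab_surj hn (syn n x) hx
    by_cases hmem : i ∈ x
    · refine ⟨x.erase i, Finset.mem_filter.mpr ⟨Finset.mem_univ _, ?_⟩, ?_⟩
      · have h2 : syn n (x.erase i) + lab n i = syn n x :=
          Finset.sum_erase_add x (lab n) hmem
        have h3 : syn n (x.erase i) = syn n x - lab n i := eq_sub_of_add_eq h2
        rw [h3, hi, sub_self]
      · have hsd1 : x \ x.erase i = {i} := by
          ext a
          simp only [Finset.mem_sdiff, Finset.mem_erase, Finset.mem_singleton]
          constructor
          · rintro ⟨ha, hne⟩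
            by_contra hai
            exact hne ⟨hai, ha⟩
          · rintro rfl
            exact ⟨hmem, fun hh => (hh.1 rfl).elim⟩
        have hsd2 : x.erase i \ x = ∅ := by
          rw [Finset.sdiff_eq_empty_iff_subset]
          exact Finset.erase_subset i x
        rw [hdist, hsd1, hsd2]
        simp
    · refine ⟨insert i x, Finset.mem_filter.mpr ⟨Finset.mem_univ _, ?_⟩, ?_⟩
      · have h1 : (∑ j ∈ insert i x, lab n j) = lab n i + ∑ j ∈ x, lab n j :=
          Finset.sum_insert hmem
        show syn n (insert i x) = 0
        have h2 : syn n (insert i x) = lab n i + syn n x := h1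
        rw [h2, hi]
        exact addself _
      · have hsd1 : insert i x \ x = {i} := by
          ext a
          simp only [Finset.mem_sdiff, Finset.mem_insert, Finset.mem_singleton]
          constructor
          · rintro ⟨ha | ha, hna⟩
            · exact ha
            · exact absurd ha hna
          · rintro rfl
            exact ⟨Or.inl rfl, hmem⟩
        have hsd2 : x \ insert i x = ∅ := by
          rw [Finset.sdiff_eq_empty_iff_subset]
          exact Finset.subset_insert i x
        rw [hdist, hsd1, hsd2]
        simp

set_option maxHeartbeats 1000000 in
theorem code_card {n : ℕ} (hb : ∀ j : Fin (Nat.log 2 (n + 1)), 2 ^ (j : ℕ) - 1 < n) :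
    (code n).card * 2 ^ Nat.log 2 (n + 1) ≤ 2 ^ n := by
  classical
  set F : Finset (Fin n) × (Fin (Nat.log 2 (n + 1)) → ZMod 2) → Finset (Fin n) :=
    fun p => symmDiff p.1 (iot hb p.2) with hF
  have hmaps : ∀ p ∈ (code n) ×ˢ (Finset.univ : Finset (Fin (Nat.log 2 (n + 1)) → ZMod 2)),
      F p ∈ (Finset.univ : Finset (Finset (Fin n))) := fun _ _ => Finset.mem_univ _
  have hinj : Set.InjOn F
      ↑((code n) ×ˢ (Finset.univ : Finset (Fin (Nat.log 2 (n + 1)) → ZMod 2))) := by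
    rintro ⟨x₁, s₁⟩ hp₁ ⟨x₂, s₂⟩ hp₂ heq
    simp only [Finset.coe_product, Set.mem_prod, Finset.mem_coe, code,
      Finset.mem_filter] at hp₁ hp₂
    have hx₁ : syn n x₁ = 0 := hp₁.1.2
    have hx₂ : syn n x₂ = 0 := hp₂.1.2
    have heq' : symmDiff x₁ (iot hb s₁) = symmDiff x₂ (iot hb s₂) := heq
    have hsyn : s₁ = s₂ := by
      have h := congrArg (syn n) heq'
      rwa [syn_symmDiff, syn_symmDiff, hx₁, hx₂, zero_add, zero_add,
        syn_iot hb, syn_iot hb] at h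
    have hx : x₁ = x₂ := by
      have h1 : symmDiff (symmDiff x₁ (iot hb s₁)) (iot hb s₁) = x₁ :=
        symmDiff_symmDiff_cancel_right _ x₁
      have h2 : symmDiff (symmDiff x₂ (iot hb s₂)) (iot hb s₂) = x₂ :=
        symmDiff_symmDiff_cancel_right _ x₂
      rw [← h1, ← h2, ← hsyn, heq', hsyn]
    rw [Prod.mk.injEq]
    exact ⟨hx, hsyn⟩
  have hcard := Finset.card_le_card_of_injOn F hmaps hinj
  rw [Finset.card_product, Finset.card_univ, Finset.card_univ, Fintype.card_fun,
    ZMod.card, Fintype.card_fin, Fintype.card_finset, Fintype.card_fin] at hcard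
  exact hcard

end Stmt11Aux

theorem stmt11 {n : ℕ} (hn : 1 ≤ n) :
    (∃ C : Finset (Finset (Fin n)), IsCoveringCode C ∧
      (C.card : ℝ) ≤ (Real.log (n + 1) + 1) * 2 ^ n / (n + 1)) ∧
    (K n : ℝ) ≤ (Real.log (n + 1) + 1) * 2 ^ n / (n + 1) := by
  classical
  open Stmt11Aux in
  have hpow_le : 2 ^ Nat.log 2 (n + 1) ≤ n + 1 := Nat.pow_log_le_self 2 (by omega)
  have hlt_pow : n + 1 < 2 ^ (Nat.log 2 (n + 1) + 1) :=
    Nat.lt_pow_succ_log_self (by norm_num) (n + 1)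
  have hb : ∀ j : Fin (Nat.log 2 (n + 1)), 2 ^ (j : ℕ) - 1 < n := by
    intro j
    have hj : (j : ℕ) + 1 ≤ Nat.log 2 (n + 1) := j.isLt
    have h1 : 2 ^ ((j : ℕ) + 1) ≤ 2 ^ Nat.log 2 (n + 1) := Nat.pow_le_pow_right (by norm_num) hj
    have h2 : 2 ^ ((j : ℕ) + 1) = 2 * 2 ^ (j : ℕ) := by rw [pow_succ]; ring
    have h3 : 1 ≤ 2 ^ (j : ℕ) := Nat.one_le_two_pow
    omega
  have hcov := code_covers hn
  have hcard := code_card hb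
  have hone : (1 : ℝ) ≤ (n : ℝ) := by exact_mod_cast hn
  have hlognn : (0 : ℝ) ≤ Real.log ((n : ℝ) + 1) := Real.log_nonneg (by linarith)
  have hkey : ((n : ℝ) + 1) ≤ (Real.log ((n : ℝ) + 1) + 1) * 2 ^ Nat.log 2 (n + 1) := by
    have hpowpos : (0 : ℝ) < 2 ^ Nat.log 2 (n + 1) := by positivity
    rcases eq_or_lt_of_le hn with h1 | h2
    · -- n = 1
      have hn1 : n = 1 := h1.symm
      subst hn1
      have hm1 : Nat.log 2 2 = 1 := Nat.log_eq_of_pow_le_of_lt_pow (by norm_num) (by norm_num)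
      rw [hm1]
      push_cast
      nlinarith [Real.log_nonneg (show (1:ℝ) ≤ (1:ℝ)+1 by norm_num)]
    · -- n ≥ 2
      have hn2 : 2 ≤ n := h2
      have hlog1 : (1 : ℝ) ≤ Real.log ((n : ℝ) + 1) := by
        rw [Real.le_log_iff_exp_le (by positivity)]
        calc Real.exp 1 ≤ 2.7182818286 := le_of_lt Real.exp_one_lt_d9
          _ ≤ 3 := by norm_num
          _ ≤ (n : ℝ) + 1 := by
            have h3 : (2 : ℝ) ≤ (n : ℝ) := by exact_mod_cast hn2
            linarith
      have hcast : ((n : ℝ) + 1) ≤ 2 * 2 ^ Nat.log 2 (n + 1) := by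
        have h4 : ((n + 1 : ℕ) : ℝ) ≤ ((2 ^ (Nat.log 2 (n + 1) + 1) : ℕ) : ℝ) := by
          exact_mod_cast le_of_lt hlt_pow
        push_cast at h4
        rw [pow_succ] at h4
        linarith
      nlinarith
  have hbound : ((code n).card : ℝ) ≤ (Real.log (n + 1) + 1) * 2 ^ n / (n + 1) := by
    have hnpos : (0 : ℝ) < (n : ℝ) + 1 := by positivity
    have h1 : ((code n).card : ℝ) * 2 ^ Nat.log 2 (n + 1) ≤ 2 ^ n := by
      have h2 : (((code n).card * 2 ^ Nat.log 2 (n + 1) : ℕ) : ℝ) ≤ ((2 ^ n : ℕ) : ℝ) := by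
        exact_mod_cast hcard
      push_cast at h2
      exact h2
    rw [le_div_iff₀ hnpos]
    calc ((code n).card : ℝ) * ((n : ℝ) + 1)
        ≤ ((code n).card : ℝ) * ((Real.log ((n : ℝ) + 1) + 1) * 2 ^ Nat.log 2 (n + 1)) :=
          mul_le_mul_of_nonneg_left hkey (Nat.cast_nonneg _)
      _ = (((code n).card : ℝ) * 2 ^ Nat.log 2 (n + 1)) * (Real.log ((n : ℝ) + 1) + 1) := by ring
      _ ≤ 2 ^ n * (Real.log ((n : ℝ) + 1) + 1) := by
          have hl : (0 : ℝ) ≤ Real.log ((n : ℝ) + 1) + 1 := by linarith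
          exact mul_le_mul_of_nonneg_right h1 hl
      _ = (Real.log ((n : ℝ) + 1) + 1) * 2 ^ n := by ring

  refine ⟨⟨code n, hcov, hbound⟩, ?_⟩
  have hK : K n ≤ (code n).card := Nat.sInf_le ⟨code n, hcov, rfl⟩
  calc (K n : ℝ) ≤ ((code n).card : ℝ) := by exact_mod_cast hK
    _ ≤ _ := hbound
end

section
/- Let x, y ⊆ N be two incomparable coalitions with Hamming distance exactly 3, say |x \ y| = 2 and |y \ x| = 1. Then the simple game Γ(N, {x, y}) (where S loses iff S ⊆ x or S ⊆ y) is weighted: with quota 3, weight 3 for players in N \ (x ∪ y), weight 1 for the two players in x \ y, weight 2 for the player in y \ x, and weight 0 for players in x ∩ y, a coalition S wins iff its total weight is at least 3. -/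
open Finset

theorem stmt12 {n : ℕ} (x y : Finset (Fin n))
    (hxy : (x \ y).card = 2) (hyx : (y \ x).card = 1)
    (w : Fin n → ℝ)
    (hw : ∀ i, w i = if i ∉ x ∪ y then (3 : ℝ)
      else if i ∈ x \ y then 1 else if i ∈ y \ x then 2 else 0) :
    ∀ S : Finset (Fin n), wins {x, y} S ↔ (3 : ℝ) ≤ ∑ i ∈ S, w i := by
  have hw0 : ∀ i, 0 ≤ w i := by
    intro i; rw [hw]; split_ifs <;> norm_num
  intro S
  have hwins : wins {x, y} S ↔ ¬ S ⊆ x ∧ ¬ S ⊆ y := by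
    simp [wins]
  rw [hwins]
  constructor
  · rintro ⟨hx, hy⟩
    obtain ⟨a, haS, hax⟩ := Finset.not_subset.mp hx
    obtain ⟨b, hbS, hby⟩ := Finset.not_subset.mp hy
    by_cases hay : a ∈ y
    · by_cases hbx : b ∈ x
      · have hab : a ≠ b := fun h => hax (h ▸ hbx)
        have hsum : ∑ i ∈ {a, b}, w i ≤ ∑ i ∈ S, w i := by
          apply Finset.sum_le_sum_of_subset_of_nonneg
          · intro i hi
            simp only [Finset.mem_insert, Finset.mem_singleton] at hi
            rcases hi with h | h <;> subst h <;> assumption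
          · intro i _ _; exact hw0 i
        rw [Finset.sum_pair hab] at hsum
        have hwa : w a = 2 := by
          rw [hw]; simp [hax, hay, Finset.mem_union, Finset.mem_sdiff]
        have hwb : w b = 1 := by
          rw [hw]; simp [hbx, hby, Finset.mem_union, Finset.mem_sdiff]
        linarith
      · have hwb : w b = 3 := by
          rw [hw]; simp [hbx, hby, Finset.mem_union]
        have := Finset.single_le_sum (fun i _ => hw0 i) hbS
        linarith
    · have hwa : w a = 3 := by
        rw [hw]; simp [hax, hay, Finset.mem_union]
      have := Finset.single_le_sum (fun i _ => hw0 i) haS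
      linarith
  · intro h3
    constructor
    · intro hSx
      have hle : ∀ i ∈ S, w i ≤ if i ∈ x \ y then (1 : ℝ) else 0 := by
        intro i hi
        have hix : i ∈ x := hSx hi
        rw [hw]
        by_cases hiy : i ∈ y <;>
          simp [hix, hiy, Finset.mem_union, Finset.mem_sdiff]
      have h1 : ∑ i ∈ S, w i ≤ ∑ i ∈ S, (if i ∈ x \ y then (1 : ℝ) else 0) :=
        Finset.sum_le_sum hle
      have h2 : ∑ i ∈ S, (if i ∈ x \ y then (1 : ℝ) else 0)
          = ((S.filter (· ∈ x \ y)).card : ℝ) := by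
        rw [← Finset.sum_filter]
        simp
      have h4 : (S.filter (· ∈ x \ y)).card ≤ 2 := by
        calc (S.filter (· ∈ x \ y)).card ≤ (x \ y).card :=
              Finset.card_le_card (fun i hi => (Finset.mem_filter.mp hi).2)
          _ = 2 := hxy
      have : ((S.filter (· ∈ x \ y)).card : ℝ) ≤ 2 := by exact_mod_cast h4
      linarith
    · intro hSy
      have hle : ∀ i ∈ S, w i ≤ if i ∈ y \ x then (2 : ℝ) else 0 := by
        intro i hi
        have hiy : i ∈ y := hSy hi
        rw [hw]
        by_cases hix : i ∈ x <;>
          simp [hix, hiy, Finset.mem_union, Finset.mem_sdiff]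
      have h1 : ∑ i ∈ S, w i ≤ ∑ i ∈ S, (if i ∈ y \ x then (2 : ℝ) else 0) :=
        Finset.sum_le_sum hle
      have h2 : ∑ i ∈ S, (if i ∈ y \ x then (2 : ℝ) else 0)
          = 2 * ((S.filter (· ∈ y \ x)).card : ℝ) := by
        rw [← Finset.sum_filter]
        simp [mul_comm]
      have h4 : (S.filter (· ∈ y \ x)).card ≤ 1 := by
        calc (S.filter (· ∈ y \ x)).card ≤ (y \ x).card :=
              Finset.card_le_card (fun i hi => (Finset.mem_filter.mp hi).2)
          _ = 1 := hyx
      have : ((S.filter (· ∈ y \ x)).card : ℝ) ≤ 1 := by exact_mod_cast h4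
      linarith
end

section
/- Let x, y ⊆ N be two incomparable coalitions with Hamming distance exactly 2 (so |x \ y| = |y \ x| = 1). Then the simple game Γ(N, {x, y}) (where S loses iff S ⊆ x or S ⊆ y) is weighted. -/
open Finset

theorem stmt13 {n : ℕ} (x y : Finset (Fin n))
    (hxy : (x \ y).card = 1) (hyx : (y \ x).card = 1) :
    IsWeighted (wins ({x, y} : Finset (Finset (Fin n)))) := by
  classical
  set w : Fin n → ℝ := fun i => if i ∈ x ∪ y then (if i ∈ x ∩ y then 0 else 1) else 2 with hw
  have hnn : ∀ i, 0 ≤ w i := by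
    intro i; simp only [hw]; split_ifs <;> norm_num
  have hge1 : ∀ i, (i ∉ x ∨ i ∉ y) → 1 ≤ w i := by
    intro i hi
    simp only [hw, mem_union, mem_inter]
    split_ifs with h1 h2
    · tauto
    · norm_num
    · norm_num
  have bx : ∀ (z z' : Finset (Fin n)), (z \ z').card = 1 → x ∪ y = z ∪ z' →
      x ∩ y = z ∩ z' → ∀ S : Finset (Fin n), S ⊆ z → ∑ k ∈ S, w k ≤ 1 := by
    intro z z' hcard hU hI S hSz
    have step : ∑ k ∈ S, w k ≤ ∑ k ∈ S, (if k ∈ z \ z' then (1:ℝ) else 0) := by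
      apply Finset.sum_le_sum
      intro k hk
      have hkz : k ∈ z := hSz hk
      simp only [hw, hU, hI, mem_union, mem_inter, mem_sdiff]
      by_cases hkz' : k ∈ z' <;> simp [hkz, hkz']
    refine step.trans ?_
    rw [Finset.sum_ite, Finset.sum_const_zero, add_zero]
    simp only [Finset.sum_const, nsmul_eq_mul, mul_one]
    have : (S.filter (· ∈ z \ z')).card ≤ (z \ z').card :=
      Finset.card_le_card (by intro k hk; exact (Finset.mem_filter.1 hk).2)
    calc ((S.filter (· ∈ z \ z')).card : ℝ) ≤ ((z \ z').card : ℝ) := by exact_mod_cast this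
      _ = 1 := by rw [hcard]; norm_num
  refine ⟨2, w, by norm_num, hnn, fun S => ?_⟩
  have hwins : wins ({x, y} : Finset (Finset (Fin n))) S ↔ ¬ S ⊆ x ∧ ¬ S ⊆ y := by
    simp [wins]
  rw [hwins]
  constructor
  · rintro ⟨hx, hy⟩
    obtain ⟨i, hiS, hix⟩ := Finset.not_subset.1 hx
    obtain ⟨j, hjS, hjy⟩ := Finset.not_subset.1 hy
    by_cases hij : i = j
    · subst hij
      have h2 : w i = 2 := by simp [hw, hix, hjy]
      calc (2:ℝ) = w i := h2.symm
        _ ≤ ∑ k ∈ S, w k := Finset.single_le_sum (fun k _ => hnn k) hiS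
    · have hsub : ({i, j} : Finset (Fin n)) ⊆ S := by
        intro k hk
        rcases Finset.mem_insert.1 hk with rfl | hk
        · exact hiS
        · rcases Finset.mem_singleton.1 hk with rfl; exact hjS
      calc (2:ℝ) = 1 + 1 := by norm_num
        _ ≤ w i + w j := add_le_add (hge1 i (Or.inl hix)) (hge1 j (Or.inr hjy))
        _ = ∑ k ∈ ({i, j} : Finset (Fin n)), w k := (Finset.sum_pair hij).symm
        _ ≤ ∑ k ∈ S, w k := Finset.sum_le_sum_of_subset_of_nonneg hsub (fun k _ _ => hnn k)
  · intro hsum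
    by_contra hcon
    rw [not_and_or, not_not, not_not] at hcon
    have hle : ∑ k ∈ S, w k ≤ 1 := by
      rcases hcon with h | h
      · exact bx x y hxy rfl rfl S h
      · exact bx y x hyx (Finset.union_comm x y) (Finset.inter_comm x y) S h
    linarith
end

section
/- Let Γ(N, L^M) be a simple game. Then there exists a subcollection C ⊆ L^M with pairwise Hamming distances at least 4 (i.e., for all distinct x, y ∈ C, d(x,y) ≥ 4) such that the dimension of Γ(N, L^M) is at most (|L^M| + |C|)/2. -/
open Finset

lemma sum_ind {n : ℕ} (S T : Finset (Fin n)) :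
    ∑ k ∈ S, (if k ∈ T then (1:ℝ) else 0) = ((S ∩ T).card : ℝ) := by
  rw [Finset.sum_boole, Finset.filter_mem_eq_inter]

lemma sum_ind' {n : ℕ} (S T : Finset (Fin n)) :
    ∑ k ∈ S, (if k ∉ T then (1:ℝ) else 0) = ((S \ T).card : ℝ) := by
  rw [Finset.sum_boole, ← Finset.sdiff_eq_filter]

lemma weightedA {n : ℕ} (y : Finset (Fin n)) :
    IsWeighted (fun S : Finset (Fin n) => ¬ S ⊆ y) := by
  refine ⟨1, fun k => if k ∉ y then 1 else 0, by norm_num, fun k => by dsimp; split_ifs <;> norm_num, fun S => ?_⟩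
  rw [sum_ind']
  show ¬ S ⊆ y ↔ _
  rw [← Finset.sdiff_nonempty, ← Finset.card_pos]
  exact_mod_cast Iff.rfl

lemma card_sdiff_split {n : ℕ} (S x y : Finset (Fin n)) :
    (S \ x).card = (S ∩ (y \ x)).card + (S \ (x ∪ y)).card := by
  rw [← Finset.card_union_of_disjoint]
  · congr 1
    ext k
    simp only [Finset.mem_sdiff, Finset.mem_union, Finset.mem_inter]
    tauto
  · rw [Finset.disjoint_left]
    intro k hk hk'
    simp only [Finset.mem_sdiff, Finset.mem_union, Finset.mem_inter] at hk hk'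
    tauto

lemma natkey (B p r s : ℕ) (hB : 1 ≤ B) (hp : p ≤ 1) (hr : r ≤ B) :
    (1 ≤ r + s ∧ 1 ≤ p + s) ↔ B + 1 ≤ B * p + r + (B + 1) * s := by
  interval_cases p <;> rcases s with _ | s
  · simp only [mul_zero, mul_one, Nat.add_zero, zero_add]; omega
  · have h1 : B + 1 ≤ (B + 1) * (s + 1) := Nat.le_mul_of_pos_right _ (Nat.succ_pos s)
    constructor
    · intro _; omega
    · intro _; omega
  · simp only [mul_zero, mul_one, Nat.add_zero, zero_add]; omega
  · have h1 : B + 1 ≤ (B + 1) * (s + 1) := Nat.le_mul_of_pos_right _ (Nat.succ_pos s)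
    constructor
    · intro _; omega
    · intro _; omega

lemma weightedB {n : ℕ} (x y : Finset (Fin n)) (hx1 : (x \ y).card = 1)
    (hyx : ¬ y ⊆ x) :
    IsWeighted (fun S : Finset (Fin n) => ¬ S ⊆ x ∧ ¬ S ⊆ y) := by
  set B : ℕ := (y \ x).card with hBdef
  have hB : 1 ≤ B := Finset.card_pos.2 (Finset.sdiff_nonempty.2 hyx)
  refine ⟨(B : ℝ) + 1,
    fun k => (B : ℝ) * (if k ∈ x \ y then 1 else 0) + (if k ∈ y \ x then 1 else 0)
      + ((B : ℝ) + 1) * (if k ∉ x ∪ y then 1 else 0), by positivity,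
    fun k => by dsimp; split_ifs <;> positivity, fun S => ?_⟩
  have hsum : ∑ k ∈ S, ((B : ℝ) * (if k ∈ x \ y then 1 else 0) + (if k ∈ y \ x then 1 else 0)
      + ((B : ℝ) + 1) * (if k ∉ x ∪ y then 1 else 0))
      = ((B * (S ∩ (x \ y)).card + (S ∩ (y \ x)).card + (B + 1) * (S \ (x ∪ y)).card : ℕ) : ℝ) := by
    rw [Finset.sum_add_distrib, Finset.sum_add_distrib, ← Finset.mul_sum, ← Finset.mul_sum,
      sum_ind, sum_ind, sum_ind']
    push_cast
    ring
  rw [hsum]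
  have hcast : ((B : ℝ) + 1) = ((B + 1 : ℕ) : ℝ) := by push_cast; ring
  rw [hcast, Nat.cast_le]
  have h1 : ¬ S ⊆ x ↔ 1 ≤ (S ∩ (y \ x)).card + (S \ (x ∪ y)).card := by
    rw [← card_sdiff_split, ← Finset.sdiff_nonempty, ← Finset.card_pos]
    exact Nat.pos_iff_ne_zero.trans (by omega)
  have h2 : ¬ S ⊆ y ↔ 1 ≤ (S ∩ (x \ y)).card + (S \ (y ∪ x)).card := by
    rw [← card_sdiff_split, ← Finset.sdiff_nonempty, ← Finset.card_pos]
    exact Nat.pos_iff_ne_zero.trans (by omega)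
  have hcomm : S \ (y ∪ x) = S \ (x ∪ y) := by rw [Finset.union_comm]
  rw [hcomm] at h2
  show (¬ S ⊆ x ∧ ¬ S ⊆ y) ↔ _
  rw [h1, h2]
  exact natkey B _ _ _ hB (le_trans (Finset.card_le_card (Finset.inter_subset_right)) hx1.le)
    (Finset.card_le_card (Finset.inter_subset_right))

lemma weighted_congr {n : ℕ} {A B : Finset (Fin n) → Prop} (h : IsWeighted A)
    (hAB : ∀ S, A S ↔ B S) : IsWeighted B := by
  obtain ⟨q, w, hq, hw, hrep⟩ := h
  exact ⟨q, w, hq, hw, fun S => (hAB S).symm.trans (hrep S)⟩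

lemma weightedPair {n : ℕ} (x y : Finset (Fin n)) (hne : x ≠ y)
    (hxy : ¬ x ⊆ y) (hyx : ¬ y ⊆ x) (hd : hdist x y ≤ 3) :
    IsWeighted (fun S : Finset (Fin n) => ¬ S ⊆ x ∧ ¬ S ⊆ y) := by
  have hx : 1 ≤ (x \ y).card := Finset.card_pos.2 (Finset.sdiff_nonempty.2 hxy)
  have hy : 1 ≤ (y \ x).card := Finset.card_pos.2 (Finset.sdiff_nonempty.2 hyx)
  unfold hdist at hd
  have hcase : (x \ y).card = 1 ∨ (y \ x).card = 1 := by omega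
  rcases hcase with h1 | h1
  · exact weightedB x y h1 hyx
  · exact weighted_congr (weightedB y x h1 hxy) (fun S => and_comm)

lemma key {n : ℕ} : ∀ L : Finset (Finset (Fin n)),
    IsAntichain (· ⊆ ·) (L : Set (Finset (Fin n))) →
    ∃ C : Finset (Finset (Fin n)), C ⊆ L ∧
      (∀ x ∈ C, ∀ y ∈ C, x ≠ y → 4 ≤ hdist x y) ∧
      ∃ d : ℕ, ∃ W : Fin d → (Finset (Fin n) → Prop),
        (∀ i, IsWeighted (W i)) ∧ (∀ S, wins L S ↔ ∀ i, W i S) ∧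
        2 * d ≤ L.card + C.card := by
  intro L
  induction L using Finset.strongInductionOn with
  | _ L ih =>
  intro hanti
  by_cases hex : ∃ x ∈ L, ∃ y ∈ L, x ≠ y ∧ hdist x y ≤ 3
  · obtain ⟨x, hx, y, hy, hne, hd⟩ := hex
    set L' := L \ {x, y} with hL'
    have hpairsub : ({x, y} : Finset (Finset (Fin n))) ⊆ L := by
      intro z hz; simp only [Finset.mem_insert, Finset.mem_singleton] at hz
      rcases hz with rfl | rfl <;> assumption
    have hsub : L' ⊂ L := Finset.sdiff_ssubset hpairsub ⟨x, by simp⟩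
    have hanti' : IsAntichain (· ⊆ ·) (L' : Set (Finset (Fin n))) :=
      hanti.subset (by exact_mod_cast Finset.sdiff_subset)
    obtain ⟨C, hCsub, hCdist, d, W, hWw, hWiff, hbound⟩ := ih L' hsub hanti'
    have hcard : L.card = L'.card + 2 := by
      rw [hL', Finset.card_sdiff_of_subset (by intro z hz; simp at hz; rcases hz with rfl | rfl <;> assumption)]
      have h2 : ({x, y} : Finset (Finset (Fin n))).card = 2 := Finset.card_pair hne
      have hle : ({x, y} : Finset (Finset (Fin n))).card ≤ L.card :=
        Finset.card_le_card (by intro z hz; simp at hz; rcases hz with rfl | rfl <;> assumption)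
      omega
    refine ⟨C, hCsub.trans Finset.sdiff_subset, hCdist, d + 1,
      Fin.cons (fun S => ¬ S ⊆ x ∧ ¬ S ⊆ y) W, ?_, ?_, by omega⟩
    · intro i
      refine Fin.cases ?_ ?_ i
      · exact weightedPair x y hne (hanti hx hy hne) (hanti hy hx hne.symm) hd
      · intro j
        simpa using hWw j
    · intro S
      rw [Fin.forall_fin_succ]
      simp only [Fin.cons_zero, Fin.cons_succ]
      rw [← hWiff]
      constructor
      · intro h
        exact ⟨⟨h x hx, h y hy⟩, fun z hz => h z (Finset.sdiff_subset hz)⟩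
      · rintro ⟨⟨h1, h2⟩, h3⟩ z hz
        by_cases hzx : z = x
        · exact hzx ▸ h1
        by_cases hzy : z = y
        · exact hzy ▸ h2
        exact h3 z (by rw [hL']; simp [hz, hzx, hzy])
  · push_neg at hex
    refine ⟨L, le_refl L, fun a ha b hb hab => by have := hex a ha b hb hab; omega, L.card,
      fun i S => ¬ S ⊆ (L.equivFin.symm i : Finset (Fin n)), fun i => weightedA _, fun S => ?_, by omega⟩
    constructor
    · intro h i
      exact h _ (L.equivFin.symm i).2
    · intro h z hz
      have := h (L.equivFin ⟨z, hz⟩)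
      simpa using this

theorem stmt14 {n : ℕ} (L : Finset (Finset (Fin n)))
    (hanti : IsAntichain (· ⊆ ·) (L : Set (Finset (Fin n)))) :
    ∃ C : Finset (Finset (Fin n)), C ⊆ L ∧
      (∀ x ∈ C, ∀ y ∈ C, x ≠ y → 4 ≤ hdist x y) ∧
      (gameDim (wins L) : ℝ) ≤ ((L.card : ℝ) + C.card) / 2 := by
  obtain ⟨C, hCsub, hCdist, d, W, hWw, hWiff, hbound⟩ := key L hanti
  have hdim : gameDim (wins L) ≤ d := Nat.sInf_le ⟨W, hWw, hWiff⟩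
  refine ⟨C, hCsub, hCdist, ?_⟩
  have h1 : (gameDim (wins L) : ℝ) ≤ (d : ℝ) := Nat.cast_le.2 hdim
  have h2 : 2 * (d : ℝ) ≤ (L.card : ℝ) + (C.card : ℝ) := by exact_mod_cast hbound
  linarith
end

section
/- If the collection L^M of maximal losing coalitions of a simple game Γ(N, L^M) contains two distinct coalitions at Hamming distance at most 3 (i.e., L^M is not a code with minimum distance 4), then the dimension of Γ(N, L^M) is strictly less than |L^M|. -/
open Finset

lemma single_weighted {n : ℕ} (z : Finset (Fin n)) :
    IsWeighted (fun S => ¬ S ⊆ z) := by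
  refine ⟨1, fun i => if i ∈ z then 0 else 1, zero_le_one, fun i => by by_cases h : i ∈ z <;> simp [h],
    fun S => ?_⟩
  have hsum : ∑ i ∈ S, (if i ∈ z then (0:ℝ) else 1) = ((S \ z).card : ℝ) := by
    rw [Finset.sum_ite, Finset.sum_const, Finset.sum_const, Finset.sdiff_eq_filter]
    simp
  rw [hsum]
  constructor
  · intro h
    have : (S \ z).Nonempty := by
      rw [Finset.sdiff_nonempty]; exact h
    have := Finset.card_pos.mpr this
    exact_mod_cast this
  · intro h hsub
    rw [← Finset.sdiff_eq_empty_iff_subset] at hsub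
    rw [hsub] at h; simp at h; linarith

lemma merged_weighted {n : ℕ} (x y : Finset (Fin n)) (a : Fin n)
    (hxy : x \ y = {a}) (hB : (y \ x).card ≤ 2) :
    IsWeighted (fun S => ¬ S ⊆ x ∧ ¬ S ⊆ y) := by
  have haxy : a ∈ x \ y := hxy ▸ Finset.mem_singleton_self a
  have hax : a ∈ x := (Finset.mem_sdiff.mp haxy).1
  have hay : a ∉ y := (Finset.mem_sdiff.mp haxy).2
  set w : Fin n → ℝ := fun i =>
    if i ∈ x ∪ y then (if i = a then 1 else if i ∈ y \ x then 1/2 else 0) else 3/2 with hw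
  have hwnn : ∀ i, 0 ≤ w i := by
    intro i; dsimp [w]; split_ifs <;> norm_num
  refine ⟨3/2, w, by norm_num, hwnn, fun S => ?_⟩
  by_cases hS : S ⊆ x ∪ y
  · by_cases haS : a ∈ S
    · by_cases hSB : (S ∩ (y \ x)).Nonempty
      · obtain ⟨b, hb⟩ := hSB
        have hbS : b ∈ S := (Finset.mem_inter.mp hb).1
        have hbyx : b ∈ y \ x := (Finset.mem_inter.mp hb).2
        have hbx : b ∉ x := (Finset.mem_sdiff.mp hbyx).2
        have hby : b ∈ y := (Finset.mem_sdiff.mp hbyx).1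
        have hab : a ≠ b := fun h => hbx (h ▸ hax)
        refine iff_of_true ⟨fun h => hbx (h hbS), fun h => hay (h haS)⟩ ?_
        have hsub : ({a, b} : Finset (Fin n)) ⊆ S := by
          intro i hi; rcases Finset.mem_insert.mp hi with h | h
          · exact h ▸ haS
          · exact (Finset.mem_singleton.mp h) ▸ hbS
        have hpair : ∑ i ∈ ({a, b} : Finset (Fin n)), w i = w a + w b :=
          Finset.sum_pair hab
        have hwa : w a = 1 := by simp [w, Finset.mem_union, hax]
        have hwb : w b = 1/2 := by simp [w, Finset.mem_union, hby, hbyx, hab.symm, hbx]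
        have := Finset.sum_le_sum_of_subset_of_nonneg hsub (fun i _ _ => hwnn i)
        rw [hpair, hwa, hwb] at this; linarith
      · -- a ∈ S, S ∩ (y\x) = ∅ : S ⊆ x, losing, sum = 1 < 3/2
        have hSx : S ⊆ x := by
          intro i hi
          rcases Finset.mem_union.mp (hS hi) with h | h
          · exact h
          by_cases hix : i ∈ x
          · exact hix
          · exact absurd ⟨i, Finset.mem_inter.mpr ⟨hi, Finset.mem_sdiff.mpr ⟨h, hix⟩⟩⟩ hSB
        refine iff_of_false (fun h => h.1 hSx) (not_le.mpr ?_)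
        have hsum : ∑ i ∈ S, w i = ∑ i ∈ S, (if i = a then (1:ℝ) else 0) := by
          refine Finset.sum_congr rfl (fun i hi => ?_)
          have hix : i ∈ x := hSx hi
          have : i ∉ y \ x := fun h => (Finset.mem_sdiff.mp h).2 hix
          simp [w, Finset.mem_union, hix, this]
        rw [hsum, Finset.sum_ite_eq' S a (fun _ => (1:ℝ))]
        simp [haS]; norm_num
    · -- a ∉ S : S ⊆ y, losing, sum ≤ 1 < 3/2
      have hSy : S ⊆ y := by
        intro i hi
        rcases Finset.mem_union.mp (hS hi) with h | h
        · by_cases hiy : i ∈ y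
          · exact hiy
          · have : i ∈ x \ y := Finset.mem_sdiff.mpr ⟨h, hiy⟩
            rw [hxy, Finset.mem_singleton] at this
            exact absurd (this ▸ hi) haS
        · exact h
      refine iff_of_false (fun h => h.2 hSy) (not_le.mpr ?_)
      have hsum : ∑ i ∈ S, w i = ∑ i ∈ S, (if i ∈ y \ x then (1/2:ℝ) else 0) := by
        refine Finset.sum_congr rfl (fun i hi => ?_)
        have hiy : i ∈ y := hSy hi
        have hia : i ≠ a := fun h => hay (h ▸ hiy)
        simp [w, Finset.mem_union, hiy, hia]
      rw [hsum, Finset.sum_ite, Finset.sum_const, Finset.sum_const, nsmul_eq_mul, nsmul_eq_mul,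
        mul_zero, add_zero]
      have hcard : (S.filter (· ∈ y \ x)).card ≤ 2 := by
        refine le_trans (Finset.card_le_card ?_) hB
        intro i hi; exact (Finset.mem_filter.mp hi).2
      have : ((S.filter (· ∈ y \ x)).card : ℝ) ≤ 2 := by exact_mod_cast hcard
      nlinarith
  · -- S ⊄ x ∪ y : winning, sum ≥ 3/2
    obtain ⟨i, hiS, hi⟩ := Finset.not_subset.mp hS
    have hix : i ∉ x := fun h => hi (Finset.mem_union_left _ h)
    have hiy : i ∉ y := fun h => hi (Finset.mem_union_right _ h)
    refine iff_of_true ⟨fun h => hix (h hiS), fun h => hiy (h hiS)⟩ ?_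
    have hwi : w i = 3/2 := by dsimp [w]; rw [if_neg hi]
    have := Finset.single_le_sum (fun j _ => hwnn j) hiS
    rw [hwi] at this; exact this

lemma key_s15 {n : ℕ} (L : Finset (Finset (Fin n))) (x y : Finset (Fin n))
    (hx : x ∈ L) (hy : y ∈ L) (hne : x ≠ y)
    (hmw : IsWeighted (fun S => ¬ S ⊆ x ∧ ¬ S ⊆ y)) :
    gameDim (wins L) < L.card := by
  classical
  set L' := (L.erase x).erase y with hL'
  have hyx : y ∈ L.erase x := Finset.mem_erase.mpr ⟨hne.symm, hy⟩
  have h2 : 1 < L.card := Finset.one_lt_card.mpr ⟨x, hx, y, hy, hne⟩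
  have hc : L'.card + 2 = L.card := by
    rw [hL', Finset.card_erase_of_mem hyx, Finset.card_erase_of_mem hx]
    omega
  have hL'sub : ∀ z ∈ L', z ∈ L := fun z hz =>
    Finset.mem_of_mem_erase (Finset.mem_of_mem_erase hz)
  let e := L'.equivFin
  set W : Fin (L'.card + 1) → (Finset (Fin n) → Prop) :=
    Fin.cons (fun S => ¬ S ⊆ x ∧ ¬ S ⊆ y)
      (fun j => fun S => ¬ S ⊆ (e.symm j : Finset (Fin n))) with hW
  have hmem : L'.card + 1 ∈ {d | ∃ W : Fin d → (Finset (Fin n) → Prop),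
      (∀ i, IsWeighted (W i)) ∧ ∀ S, wins L S ↔ ∀ i, W i S} := by
    refine ⟨W, fun i => ?_, fun S => ?_⟩
    · refine Fin.cases ?_ ?_ i
      · rw [hW, Fin.cons_zero]; exact hmw
      · intro j; rw [hW, Fin.cons_succ]; exact single_weighted _
    · constructor
      · intro h i
        refine Fin.cases ?_ ?_ i
        · rw [hW, Fin.cons_zero]; exact ⟨h x hx, h y hy⟩
        · intro j; rw [hW, Fin.cons_succ]
          exact h _ (hL'sub _ (e.symm j).2)
      · intro h z hz
        by_cases hzx : z = x
        · have h0 := h 0; rw [hW, Fin.cons_zero] at h0; exact hzx ▸ h0.1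
        by_cases hzy : z = y
        · have h0 := h 0; rw [hW, Fin.cons_zero] at h0; exact hzy ▸ h0.2
        have hz' : z ∈ L' := Finset.mem_erase.mpr ⟨hzy, Finset.mem_erase.mpr ⟨hzx, hz⟩⟩
        have hj := h (e ⟨z, hz'⟩).succ
        rw [hW, Fin.cons_succ, Equiv.symm_apply_apply] at hj
        exact hj
  have hle : gameDim (wins L) ≤ L'.card + 1 := Nat.sInf_le hmem
  omega

theorem stmt15 {n : ℕ} (L : Finset (Finset (Fin n)))
    (hanti : IsAntichain (· ⊆ ·) (L : Set (Finset (Fin n))))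
    (x y : Finset (Fin n)) (hx : x ∈ L) (hy : y ∈ L) (hne : x ≠ y)
    (hd : hdist x y ≤ 3) :
    gameDim (wins L) < L.card := by
  have hnxy : ¬ x ⊆ y := hanti (Finset.mem_coe.mpr hx) (Finset.mem_coe.mpr hy) hne
  have hnyx : ¬ y ⊆ x := hanti (Finset.mem_coe.mpr hy) (Finset.mem_coe.mpr hx) hne.symm
  have h1 : 1 ≤ (x \ y).card := by
    rw [Nat.one_le_iff_ne_zero, Ne, Finset.card_eq_zero, Finset.sdiff_eq_empty_iff_subset]
    exact hnxy
  have h2 : 1 ≤ (y \ x).card := by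
    rw [Nat.one_le_iff_ne_zero, Ne, Finset.card_eq_zero, Finset.sdiff_eq_empty_iff_subset]
    exact hnyx
  rw [hdist] at hd
  rcases (show (x \ y).card = 1 ∨ (y \ x).card = 1 by omega) with h | h
  · obtain ⟨a, ha⟩ := Finset.card_eq_one.mp h
    exact key_s15 L x y hx hy hne (merged_weighted x y a ha (by omega))
  · obtain ⟨a, ha⟩ := Finset.card_eq_one.mp h
    exact key_s15 L y x hy hx hne.symm (merged_weighted y x a ha (by omega))
end

section
/- The simple game on N = {1,...,7} with maximal losing coalitions L^M = {{1,2,3}, {3,4,5,6}} equals the intersection of the weighted games [1; 0,0,0,1,1,1,1] and [1; 1,1,0,0,0,0,1], and it is not itself a weighted game; hence its dimension is exactly 2. -/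
open Finset

lemma key_s16 {n : ℕ} (A B : Finset (Fin n)) (h : ∀ i, i ∈ A ↔ i ∉ B) (w : Fin n → ℝ)
    (hw : ∀ i, w i = if i ∈ A then 1 else 0) (S : Finset (Fin n)) :
    (1:ℝ) ≤ ∑ i ∈ S, w i ↔ ¬ S ⊆ B := by
  have : ∑ i ∈ S, w i = ((S ∩ A).card : ℝ) := by
    simp_rw [hw, Finset.sum_ite_mem, Finset.sum_const, nsmul_eq_mul, mul_one]
  rw [this]
  rw [show ((1:ℝ) ≤ ((S ∩ A).card : ℝ)) ↔ 0 < (S ∩ A).card by exact_mod_cast Nat.one_le_iff_ne_zero.trans (Nat.pos_iff_ne_zero).symm]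
  rw [Finset.card_pos, Finset.subset_iff]
  constructor
  · rintro ⟨i, hi⟩ hsub
    simp only [Finset.mem_inter] at hi
    exact (h i).1 hi.2 (hsub hi.1)
  · intro hns
    push_neg at hns
    obtain ⟨i, hiS, hiB⟩ := hns
    exact ⟨i, Finset.mem_inter.2 ⟨hiS, (h i).2 hiB⟩⟩
lemma wins_iff (S : Finset (Fin 7)) :
    wins ({({0, 1, 2} : Finset (Fin 7)), {2, 3, 4, 5}} : Finset (Finset (Fin 7))) S ↔
      ¬ S ⊆ ({0,1,2} : Finset (Fin 7)) ∧ ¬ S ⊆ ({2,3,4,5} : Finset (Fin 7)) := by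
  simp [wins]

lemma part1 : (∀ S : Finset (Fin 7),
      wins ({({0, 1, 2} : Finset (Fin 7)), {2, 3, 4, 5}} : Finset (Finset (Fin 7))) S ↔
        ((1 : ℝ) ≤ ∑ i ∈ S, (![0, 0, 0, 1, 1, 1, 1] : Fin 7 → ℝ) i ∧
         (1 : ℝ) ≤ ∑ i ∈ S, (![1, 1, 0, 0, 0, 0, 1] : Fin 7 → ℝ) i)) := by
  intro S
  rw [wins_iff,
    key_s16 ({3,4,5,6} : Finset (Fin 7)) {0,1,2} (by decide) _ (fun i => by fin_cases i <;> rfl) S,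
    key_s16 ({0,1,6} : Finset (Fin 7)) {2,3,4,5} (by decide) _ (fun i => by fin_cases i <;> rfl) S]

lemma part2 : ¬ IsWeighted (wins ({({0, 1, 2} : Finset (Fin 7)), {2, 3, 4, 5}} :
        Finset (Finset (Fin 7)))) := by
  rintro ⟨q, w, -, -, hw⟩
  have h03 := (hw {0,3}).1 (by rw [wins_iff]; refine ⟨?_, ?_⟩ <;> decide)
  have h14 := (hw {1,4}).1 (by rw [wins_iff]; refine ⟨?_, ?_⟩ <;> decide)
  have h01 : ¬ q ≤ ∑ i ∈ ({0,1} : Finset (Fin 7)), w i := by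
    rw [← hw, wins_iff]; intro ⟨h, _⟩; exact h (by decide)
  have h34 : ¬ q ≤ ∑ i ∈ ({3,4} : Finset (Fin 7)), w i := by
    rw [← hw, wins_iff]; intro ⟨_, h⟩; exact h (by decide)
  push_neg at h01 h34
  have e1 : ∑ i ∈ ({0,3} : Finset (Fin 7)), w i = w 0 + w 3 := by
    rw [Finset.sum_pair (by decide)]
  have e2 : ∑ i ∈ ({1,4} : Finset (Fin 7)), w i = w 1 + w 4 := by
    rw [Finset.sum_pair (by decide)]
  have e3 : ∑ i ∈ ({0,1} : Finset (Fin 7)), w i = w 0 + w 1 := by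
    rw [Finset.sum_pair (by decide)]
  have e4 : ∑ i ∈ ({3,4} : Finset (Fin 7)), w i = w 3 + w 4 := by
    rw [Finset.sum_pair (by decide)]
  rw [e1] at h03; rw [e2] at h14; rw [e3] at h01; rw [e4] at h34
  linarith

lemma part3 : gameDim (wins ({({0, 1, 2} : Finset (Fin 7)), {2, 3, 4, 5}} :
        Finset (Finset (Fin 7)))) = 2 := by
  have hmem : 2 ∈ {d | ∃ W : Fin d → (Finset (Fin 7) → Prop),
      (∀ i, IsWeighted (W i)) ∧ ∀ S, wins ({({0, 1, 2} : Finset (Fin 7)), {2, 3, 4, 5}} :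
        Finset (Finset (Fin 7))) S ↔ ∀ i, W i S} := by
    refine ⟨![fun S => (1:ℝ) ≤ ∑ i ∈ S, (![0, 0, 0, 1, 1, 1, 1] : Fin 7 → ℝ) i,
              fun S => (1:ℝ) ≤ ∑ i ∈ S, (![1, 1, 0, 0, 0, 0, 1] : Fin 7 → ℝ) i], ?_, ?_⟩
    · intro i
      fin_cases i
      · exact ⟨1, _, by norm_num, fun j => by fin_cases j <;> norm_num, fun S => Iff.rfl⟩
      · exact ⟨1, _, by norm_num, fun j => by fin_cases j <;> norm_num, fun S => Iff.rfl⟩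
    · intro S
      rw [part1 S]
      constructor
      · rintro ⟨h1, h2⟩ i; fin_cases i <;> assumption
      · intro h; exact ⟨h 0, h 1⟩
  refine le_antisymm (Nat.sInf_le hmem) ?_
  refine le_csInf ⟨2, hmem⟩ ?_
  rintro d ⟨W, hW, hiff⟩
  by_contra hd
  push_neg at hd
  interval_cases d
  · have : wins ({({0, 1, 2} : Finset (Fin 7)), {2, 3, 4, 5}} :
        Finset (Finset (Fin 7))) ∅ := (hiff ∅).2 (fun i => i.elim0)
    rw [wins_iff] at this
    exact this.1 (by decide)
  · obtain ⟨q, w, hq, hwn, hrep⟩ := hW 0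
    exact part2 ⟨q, w, hq, hwn, fun S => by
      rw [hiff S, ← hrep S]
      exact ⟨fun h => h 0, fun h i => by fin_cases i; exact h⟩⟩

theorem stmt16 :
    (∀ S : Finset (Fin 7),
      wins ({({0, 1, 2} : Finset (Fin 7)), {2, 3, 4, 5}} : Finset (Finset (Fin 7))) S ↔
        ((1 : ℝ) ≤ ∑ i ∈ S, (![0, 0, 0, 1, 1, 1, 1] : Fin 7 → ℝ) i ∧
         (1 : ℝ) ≤ ∑ i ∈ S, (![1, 1, 0, 0, 0, 0, 1] : Fin 7 → ℝ) i)) ∧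
    ¬ IsWeighted (wins ({({0, 1, 2} : Finset (Fin 7)), {2, 3, 4, 5}} :
        Finset (Finset (Fin 7)))) ∧
    gameDim (wins ({({0, 1, 2} : Finset (Fin 7)), {2, 3, 4, 5}} :
        Finset (Finset (Fin 7)))) = 2 := ⟨part1, part2, part3⟩
end
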